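/- arXiv:2503.18220 — 6 statements merged into one kernel-verified Lean document; each statement's English description precedes it below -/
import Mathlib

section
/- Suppose the priority profile ≿_s satisfies PD, WO, and DC. Then for any subset J of students with |J| ≤ q_s − 1 and any three distinct students i, j, k not in J: if i ≻_s^{J∪{k}} j and j ≻_s^{J∪{i}} k, then i ≻_s^{J∪{j}} k. -/
open Finset

variable {I T S : Type*}

/-- `a` (a student or the null student `none`) is not a member of `J`. -/
def NotInOpt (a : Option I) (J : Finset I) : Prop := ∀ i ∈ a, i ∉ J

/-- Strict part `≻` of the weak priority order `ge = ≿`. -/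
def StrictP (ge : Finset I → Option I → Option I → Prop) (J : Finset I) (a b : Option I) :
    Prop :=
  ge J a b ∧ ¬ ge J b a

/-- Symmetric part `∼` of the weak priority order `ge = ≿`. -/
def SimP (ge : Finset I → Option I → Option I → Prop) (J : Finset I) (a b : Option I) :
    Prop :=
  ge J a b ∧ ge J b a

/-- `tcnt τ J a` = number of students in `J` of the same type as `a` (0 for the null student). -/
def tcnt [DecidableEq T] (τ : I → T) (J : Finset I) : Option I → ℕ
  | none => 0
  | some i => (J.filter fun x => τ x = τ i).card

/-- Completeness of each `≿ₛᴶ` on `(I∖J) ∪ {∅}`. -/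
def CompleteP (q : ℕ) (ge : Finset I → Option I → Option I → Prop) : Prop :=
  ∀ J : Finset I, J.card < q → ∀ a b : Option I, NotInOpt a J → NotInOpt b J →
    ge J a b ∨ ge J b a

/-- Transitivity of each `≿ₛᴶ` on `(I∖J) ∪ {∅}`. -/
def TransP (q : ℕ) (ge : Finset I → Option I → Option I → Prop) : Prop :=
  ∀ J : Finset I, J.card < q → ∀ a b c : Option I,
    NotInOpt a J → NotInOpt b J → NotInOpt c J → ge J a b → ge J b c → ge J a c

/-- Antisymmetry of each `≿ₛᴶ` (so that it is a linear order). -/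
def AntisymP (q : ℕ) (ge : Finset I → Option I → Option I → Prop) : Prop :=
  ∀ J : Finset I, J.card < q → ∀ a b : Option I, NotInOpt a J → NotInOpt b J →
    ge J a b → ge J b a → a = b

/-- PD (preference for diversity). -/
def PD [DecidableEq T] (τ : I → T) (q : ℕ)
    (ge : Finset I → Option I → Option I → Prop) : Prop :=
  ∀ J J' : Finset I, ∀ a b : Option I,
    J.card < q → J'.card < q →
    NotInOpt a J → NotInOpt b J → NotInOpt a J' → NotInOpt b J' →
    tcnt τ J' a ≤ tcnt τ J a → tcnt τ J b ≤ tcnt τ J' b →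
    (StrictP ge J a b → StrictP ge J' a b) ∧ (ge J a b → ge J' a b)

/-- WO (within-type ordering). -/
def WO [DecidableEq T] (τ : I → T) (q : ℕ)
    (ge : Finset I → Option I → Option I → Prop) : Prop :=
  ∀ J J' : Finset I, ∀ i j : I,
    J.card < q → J'.card < q →
    i ∉ J → j ∉ J → i ∉ J' → j ∉ J' → τ i = τ j →
    (StrictP ge J (some i) (some j) → StrictP ge J' (some i) (some j)) ∧
    (ge J (some i) (some j) → ge J' (some i) (some j))

/-- DC (distributional consistency of WO). -/
def DC [DecidableEq I] [DecidableEq T] (τ : I → T) (q : ℕ)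
    (ge : Finset I → Option I → Option I → Prop) : Prop :=
  ∀ J : Finset I, ∀ i j : I, ∀ k : Option I,
    J.card + 1 < q → i ≠ j → i ∉ J → j ∉ J → NotInOpt k J →
    k ≠ some i → k ≠ some j → τ i = τ j → ge J (some i) (some j) →
    (StrictP ge (insert i J) (some j) k → StrictP ge (insert j J) (some i) k) ∧
    (SimP ge (insert i J) (some j) k → SimP ge (insert j J) (some i) k) ∧
    (StrictP ge (insert i J) k (some j) → StrictP ge (insert j J) k (some i))

lemma noi {i : I} {S : Finset I} (h : i ∉ S) : NotInOpt (some i) S := by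
  intro a ha
  simp only [Option.mem_def, Option.some.injEq] at ha
  subst ha; exact h

lemma tcnt_mono [DecidableEq T] (τ : I → T) {J J' : Finset I} (h : J ⊆ J') :
    ∀ a : Option I, tcnt τ J a ≤ tcnt τ J' a
  | none => le_refl 0
  | some i => card_le_card (filter_subset_filter _ h)

lemma tcnt_insert_of_ne [DecidableEq I] [DecidableEq T] (τ : I → T) {x i : I} (J : Finset I)
    (h : τ x ≠ τ i) : tcnt τ (insert x J) (some i) = tcnt τ J (some i) := by
  simp [tcnt, filter_insert, h]

/-- **Lemma 1.** If `≿ₛ` satisfies PD, WO and DC, then for any `J` with `|J∪{·}| ≤ qₛ − 1` and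
distinct `i, j, k ∉ J`: `i ≻ₛ^{J∪{k}} j` and `j ≻ₛ^{J∪{i}} k` imply `i ≻ₛ^{J∪{j}} k`. -/
theorem lemma1 [DecidableEq I] [DecidableEq T] (τ : I → T) (q : ℕ)
    (ge : Finset I → Option I → Option I → Prop)
    (hcomp : CompleteP q ge) (htr : TransP q ge)
    (hPD : PD τ q ge) (hWO : WO τ q ge) (hDC : DC τ q ge)
    (J : Finset I) (hJ : J.card + 1 < q)
    (i j k : I) (hij : i ≠ j) (hik : i ≠ k) (hjk : j ≠ k)
    (hi : i ∉ J) (hj : j ∉ J) (hk : k ∉ J)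
    (h1 : StrictP ge (insert k J) (some i) (some j))
    (h2 : StrictP ge (insert i J) (some j) (some k)) :
    StrictP ge (insert j J) (some i) (some k) := by
  have hJq : J.card < q := Nat.lt_of_succ_lt hJ
  have hcards : ∀ x : I, (insert x J).card < q := fun x =>
    lt_of_le_of_lt (card_insert_le x J) hJ
  have niK : i ∉ insert k J := by simp [hik, hi]
  have njK : j ∉ insert k J := by simp [hjk, hj]
  have njI : j ∉ insert i J := by simp [Ne.symm hij, hj]
  have nkI : k ∉ insert i J := by simp [Ne.symm hik, hk]
  have niJ' : i ∉ insert j J := by simp [hij, hi]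
  have nkJ' : k ∉ insert j J := by simp [Ne.symm hjk, hk]
  by_cases hτij : τ i = τ j
  · -- Case τi = τj : move h1 down to J by WO, then DC transfers h2.
    have h1J : StrictP ge J (some i) (some j) :=
      (hWO (insert k J) J i j (hcards k) hJq niK njK hi hj hτij).1 h1
    exact (hDC J i j (some k) hJ hij hi hj (noi hk)
      (by simp [Ne.symm hik]) (by simp [Ne.symm hjk]) hτij h1J.1).1 h2
  · by_cases hτjk : τ j = τ k
    · -- Case τj = τk : move h2 down to J by WO, then DC (contrapositively) + completeness.
      have h2J : StrictP ge J (some j) (some k) :=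
        (hWO (insert i J) J j k (hcards i) hJq njI nkI hj hk hτjk).1 h2
      have dc := hDC J j k (some i) hJ hjk hj hk (noi hi)
        (by simp [hij]) (by simp [hik]) hτjk h2J.1
      have hnki : ¬ ge (insert j J) (some k) (some i) := by
        intro hki
        by_cases hik' : ge (insert j J) (some i) (some k)
        · exact h1.2 (dc.2.1 ⟨hki, hik'⟩).1
        · exact h1.2 (dc.1 ⟨hki, hik'⟩).1
      rcases hcomp (insert j J) (hcards j) (some i) (some k) (noi niJ') (noi nkJ') with h | h
      · exact ⟨h, hnki⟩
      · exact absurd h hnki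
    · by_cases hτik : τ i = τ k
      · -- Case τi = τk : rule out ge J k i by DC, then completeness + WO.
        have hnki : ¬ ge J (some k) (some i) := by
          intro hki
          have dc := hDC J k i (some j) hJ (Ne.symm hik) hk hi (noi hj)
            (by simp [hjk]) (by simp [Ne.symm hij]) hτik.symm hki
          exact h2.2 (dc.1 h1).1
        have hjik : ge J (some i) (some k) := by
          rcases hcomp J hJq (some i) (some k) (noi hi) (noi hk) with h | h
          · exact h
          · exact absurd h hnki
        exact (hWO J (insert j J) i k hJq (hcards j) hi hk niJ' nkJ' hτik).1 ⟨hjik, hnki⟩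
      · -- All types distinct : use PD to transfer to J, transitivity, PD back up.
        have sub1 : J ⊆ insert k J := subset_insert k J
        have sub2 : J ⊆ insert i J := subset_insert i J
        have sub3 : J ⊆ insert j J := subset_insert j J
        have h1J : StrictP ge J (some i) (some j) :=
          (hPD (insert k J) J (some i) (some j) (hcards k) hJq (noi niK) (noi njK)
            (noi hi) (noi hj) (tcnt_mono τ sub1 (some i))
            (le_of_eq (tcnt_insert_of_ne τ J (fun h => hτjk h.symm)))).1 h1
        have h2J : StrictP ge J (some j) (some k) :=
          (hPD (insert i J) J (some j) (some k) (hcards i) hJq (noi njI) (noi nkI)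
            (noi hj) (noi hk) (tcnt_mono τ sub2 (some j))
            (le_of_eq (tcnt_insert_of_ne τ J hτik))).1 h2
        have hikJ : ge J (some i) (some k) :=
          htr J hJq (some i) (some j) (some k) (noi hi) (noi hj) (noi hk) h1J.1 h2J.1
        have hnki : ¬ ge J (some k) (some i) := by
          intro hki
          exact h2J.2 (htr J hJq (some k) (some i) (some j) (noi hk) (noi hi) (noi hj)
            hki h1J.1)
        exact (hPD J (insert j J) (some i) (some k) hJq (hcards j) (noi hi) (noi hk)
          (noi niJ') (noi nkJ')
          (le_of_eq (tcnt_insert_of_ne τ J (fun h => hτij h.symm)))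
          (tcnt_mono τ sub3 (some k))).1 ⟨hikJ, hnki⟩
end

section
/- Suppose the priority profile ≿_s satisfies PD, WO, and DC. Then for any subset J of students with 2 ≤ |J| ≤ q_s + 1, there exists a student i ∈ J that has the lowest priority within J; that is, j ≿_s^{J∖{i,j}} i for all j ∈ J∖{i}. -/
open Finset

variable {I T S : Type*}

section Lemma2Aux

variable [DecidableEq I] [DecidableEq T]

lemma notInOpt_some {x : I} {J : Finset I} (h : x ∉ J) : NotInOpt (some x) J := by
  intro i hi
  rcases Option.mem_some_iff.mp hi with rfl
  exact h

lemma strict_trans_at (q : ℕ) (ge : Finset I → Option I → Option I → Prop)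
    (htr : TransP q ge) {S : Finset I} (hS : S.card < q)
    {a b c : I} (ha : a ∉ S) (hb : b ∉ S) (hc : c ∉ S)
    (h1 : StrictP ge S (some a) (some b)) (h2 : StrictP ge S (some b) (some c)) :
    StrictP ge S (some a) (some c) := by
  refine ⟨htr S hS _ _ _ (notInOpt_some ha) (notInOpt_some hb) (notInOpt_some hc) h1.1 h2.1, ?_⟩
  intro hca
  exact h1.2 (htr S hS _ _ _ (notInOpt_some hb) (notInOpt_some hc) (notInOpt_some ha) h2.1 hca)

lemma tcnt_insert_ne (τ : I → T) {k x : I} {S : Finset I} (h : ¬ τ k = τ x) :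
    tcnt τ (insert k S) (some x) = tcnt τ S (some x) := by
  simp only [tcnt, Finset.filter_insert, if_neg h]

lemma key_trans (τ : I → T) (q : ℕ) (ge : Finset I → Option I → Option I → Prop)
    (hcomp : CompleteP q ge) (htr : TransP q ge)
    (hPD : PD τ q ge) (hWO : WO τ q ge) (hDC : DC τ q ge)
    (J : Finset I) (hq : J.card ≤ q + 1)
    {i j k : I} (hi : i ∈ J) (hj : j ∈ J) (hk : k ∈ J)
    (hij : i ≠ j) (hjk : j ≠ k) (hik : i ≠ k)
    (h1 : StrictP ge (J \ {i, j}) (some i) (some j))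
    (h2 : StrictP ge (J \ {j, k}) (some j) (some k)) :
    StrictP ge (J \ {i, k}) (some i) (some k) := by
  set J0 := J \ {i, j, k} with hJ0
  have hiJ0 : i ∉ J0 := by simp [hJ0]
  have hjJ0 : j ∉ J0 := by simp [hJ0]
  have hkJ0 : k ∉ J0 := by simp [hJ0]
  have hA : J \ {i, j} = insert k J0 := by
    rw [hJ0]; ext x
    simp only [mem_sdiff, mem_insert, mem_singleton, not_or]
    constructor
    · rintro ⟨hxJ, hxi, hxj⟩
      by_cases hxk : x = k
      · exact Or.inl hxk
      · exact Or.inr ⟨hxJ, hxi, hxj, hxk⟩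
    · rintro (rfl | ⟨hxJ, hxi, hxj, _⟩)
      · exact ⟨hk, fun h => hik h.symm, fun h => hjk h.symm⟩
      · exact ⟨hxJ, hxi, hxj⟩
  have hB : J \ {j, k} = insert i J0 := by
    rw [hJ0]; ext x
    simp only [mem_sdiff, mem_insert, mem_singleton, not_or]
    constructor
    · rintro ⟨hxJ, hxj, hxk⟩
      by_cases hxi : x = i
      · exact Or.inl hxi
      · exact Or.inr ⟨hxJ, hxi, hxj, hxk⟩
    · rintro (rfl | ⟨hxJ, hxi, hxj, hxk⟩)
      · exact ⟨hi, hij, hik⟩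
      · exact ⟨hxJ, hxj, hxk⟩
  have hC : J \ {i, k} = insert j J0 := by
    rw [hJ0]; ext x
    simp only [mem_sdiff, mem_insert, mem_singleton, not_or]
    constructor
    · rintro ⟨hxJ, hxi, hxk⟩
      by_cases hxj : x = j
      · exact Or.inl hxj
      · exact Or.inr ⟨hxJ, hxi, hxj, hxk⟩
    · rintro (rfl | ⟨hxJ, hxi, hxj, hxk⟩)
      · exact ⟨hj, fun h => hij h.symm, hjk⟩
      · exact ⟨hxJ, hxi, hxk⟩
  have hsub : ({i, j, k} : Finset I) ⊆ J := by
    intro x hx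
    simp only [mem_insert, mem_singleton] at hx
    rcases hx with rfl | rfl | rfl <;> assumption
  have hcard3 : ({i, j, k} : Finset I).card = 3 := by
    rw [card_insert_of_notMem (by simp [hij, hik]),
      card_insert_of_notMem (by simp [hjk]), card_singleton]
  have hJ3 : 3 ≤ J.card := hcard3 ▸ card_le_card hsub
  have hJ0card : J0.card + 3 = J.card := by
    rw [hJ0, card_sdiff_of_subset hsub, hcard3]; omega
  have hq2 : J0.card + 2 ≤ q := by omega
  have hc0 : J0.card < q := by omega
  have hcA : (insert k J0).card < q := by rw [card_insert_of_notMem hkJ0]; omega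
  have hcB : (insert i J0).card < q := by rw [card_insert_of_notMem hiJ0]; omega
  have hcC : (insert j J0).card < q := by rw [card_insert_of_notMem hjJ0]; omega
  have hiA : i ∉ insert k J0 := by simp [hik, hiJ0]
  have hjA : j ∉ insert k J0 := by simp [hjk, hjJ0]
  have hjB : j ∉ insert i J0 := by simp [Ne.symm hij, hjJ0]
  have hkB : k ∉ insert i J0 := by simp [Ne.symm hik, hkJ0]
  have hiC : i ∉ insert j J0 := by simp [hij, hiJ0]
  have hkC : k ∉ insert j J0 := by simp [Ne.symm hjk, hkJ0]
  rw [hA] at h1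
  rw [hB] at h2
  rw [hC]
  by_cases htij : τ i = τ j
  · by_cases htjk : τ j = τ k
    · -- all three same type: go through J0 using WO and transitivity
      have e1 : StrictP ge J0 (some i) (some j) :=
        (hWO (insert k J0) J0 i j hcA hc0 hiA hjA hiJ0 hjJ0 htij).1 h1
      have e2 : StrictP ge J0 (some j) (some k) :=
        (hWO (insert i J0) J0 j k hcB hc0 hjB hkB hjJ0 hkJ0 htjk).1 h2
      have e3 := strict_trans_at q ge htr hc0 hiJ0 hjJ0 hkJ0 e1 e2
      exact (hWO J0 (insert j J0) i k hc0 hcC hiJ0 hkJ0 hiC hkC (htij.trans htjk)).1 e3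
    · -- τ i = τ j ≠ τ k : use DC directly
      have e1 : ge J0 (some i) (some j) :=
        ((hWO (insert k J0) J0 i j hcA hc0 hiA hjA hiJ0 hjJ0 htij).1 h1).1
      exact (hDC J0 i j (some k) (by omega) hij hiJ0 hjJ0 (notInOpt_some hkJ0)
        (by simp [Ne.symm hik]) (by simp [Ne.symm hjk]) htij e1).1 h2
  · by_cases htjk : τ j = τ k
    · -- τ j = τ k ≠ τ i : use DC plus completeness
      have e2 : ge J0 (some j) (some k) :=
        ((hWO (insert i J0) J0 j k hcB hc0 hjB hkB hjJ0 hkJ0 htjk).1 h2).1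
      have dc := hDC J0 j k (some i) (by omega) hjk hjJ0 hkJ0 (notInOpt_some hiJ0)
        (by simp [hij]) (by simp [hik]) htjk e2
      have nS : ¬ StrictP ge (insert j J0) (some k) (some i) := by
        intro hS
        exact (dc.1 hS).2 h1.1
      have nSim : ¬ SimP ge (insert j J0) (some k) (some i) := by
        intro hS
        exact h1.2 (dc.2.1 hS).1
      rcases hcomp (insert j J0) hcC (some i) (some k)
          (notInOpt_some hiC) (notInOpt_some hkC) with hik' | hki'
      · exact ⟨hik', fun hki => nSim ⟨hki, hik'⟩⟩
      · have hik2 : ge (insert j J0) (some i) (some k) := by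
          by_contra hcon
          exact nS ⟨hki', hcon⟩
        exact absurd ⟨hki', hik2⟩ nSim
    · by_cases htik : τ i = τ k
      · -- τ i = τ k ≠ τ j
        have nki : ¬ ge (insert j J0) (some k) (some i) := by
          intro hki
          have e : ge J0 (some k) (some i) :=
            (hWO (insert j J0) J0 k i hcC hc0 hkC hiC hkJ0 hiJ0 htik.symm).2 hki
          have dc := hDC J0 k i (some j) (by omega) (Ne.symm hik) hkJ0 hiJ0
            (notInOpt_some hjJ0) (by simp [hjk]) (by simp [Ne.symm hij])
            htik.symm e
          exact h2.2 (dc.1 h1).1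
        rcases hcomp (insert j J0) hcC (some i) (some k)
            (notInOpt_some hiC) (notInOpt_some hkC) with hik' | hki'
        · exact ⟨hik', nki⟩
        · exact absurd hki' nki
      · -- all three types distinct: use PD through J0
        have eki : ¬ τ k = τ i := fun h => htik h.symm
        have ekj : ¬ τ k = τ j := fun h => htjk h.symm
        have eij : ¬ τ i = τ j := htij
        have eik : ¬ τ i = τ k := htik
        have eji : ¬ τ j = τ i := fun h => htij h.symm
        have ejk : ¬ τ j = τ k := htjk
        have e1 : StrictP ge J0 (some i) (some j) :=
          (hPD (insert k J0) J0 (some i) (some j) hcA hc0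
            (notInOpt_some hiA) (notInOpt_some hjA) (notInOpt_some hiJ0) (notInOpt_some hjJ0)
            (tcnt_insert_ne τ eki).ge (tcnt_insert_ne τ ekj).le).1 h1
        have e2 : StrictP ge J0 (some j) (some k) :=
          (hPD (insert i J0) J0 (some j) (some k) hcB hc0
            (notInOpt_some hjB) (notInOpt_some hkB) (notInOpt_some hjJ0) (notInOpt_some hkJ0)
            (tcnt_insert_ne τ eij).ge (tcnt_insert_ne τ eik).le).1 h2
        have e3 := strict_trans_at q ge htr hc0 hiJ0 hjJ0 hkJ0 e1 e2
        exact (hPD J0 (insert j J0) (some i) (some k) hc0 hcC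
          (notInOpt_some hiJ0) (notInOpt_some hkJ0) (notInOpt_some hiC) (notInOpt_some hkC)
          (tcnt_insert_ne τ eji).le (tcnt_insert_ne τ ejk).ge).1 e3

end Lemma2Aux

/-- **Lemma 2.** If `≿ₛ` satisfies PD, WO and DC, then any `J` with `2 ≤ |J| ≤ qₛ + 1` contains
a student `i` with the lowest priority within `J`: `j ≿ₛ^{J∖{i,j}} i` for all `j ∈ J∖{i}`. -/
theorem lemma2 [DecidableEq I] [DecidableEq T] (τ : I → T) (q : ℕ)
    (ge : Finset I → Option I → Option I → Prop)
    (hcomp : CompleteP q ge) (htr : TransP q ge)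
    (hPD : PD τ q ge) (hWO : WO τ q ge) (hDC : DC τ q ge)
    (J : Finset I) (h2 : 2 ≤ J.card) (hq : J.card ≤ q + 1) :
    ∃ i ∈ J, ∀ j ∈ J, j ≠ i → ge (J \ {i, j}) (some j) (some i) := by
  classical
  have hq1 : 1 ≤ q := by omega
  let r : {x // x ∈ J} → {x // x ∈ J} → Prop := fun a b =>
    a.1 ≠ b.1 ∧ StrictP ge (J \ {b.1, a.1}) (some b.1) (some a.1)
  have htrans : ∀ a b c, r a b → r b c → r a c := by
    rintro a b c ⟨hab, h1⟩ ⟨hbc, h2⟩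
    have hac : a.1 ≠ c.1 := by
      intro h
      rw [← h] at h2
      rw [Finset.pair_comm] at h2
      exact h1.2 h2.1
    exact ⟨hac, key_trans τ q ge hcomp htr hPD hWO hDC J hq c.2 b.2 a.2
      (Ne.symm hbc) (Ne.symm hab) (fun h => hac h.symm) h2 h1⟩
  have hirr : ∀ a, ¬ r a a := fun a h => h.1 rfl
  haveI : IsTrans {x // x ∈ J} r := ⟨htrans⟩
  haveI : IsIrrefl {x // x ∈ J} r := ⟨hirr⟩
  have hwf : WellFounded r := Finite.wellFounded_of_trans_of_irrefl r
  have hJne : J.Nonempty := card_pos.mp (by omega)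
  obtain ⟨m, -, hmin⟩ := hwf.has_min Set.univ
    ⟨⟨hJne.choose, hJne.choose_spec⟩, Set.mem_univ _⟩
  refine ⟨m.1, m.2, ?_⟩
  intro j hjJ hjm
  have hsub : ({m.1, j} : Finset I) ⊆ J := by
    intro x hx
    simp only [mem_insert, mem_singleton] at hx
    rcases hx with rfl | rfl
    · exact m.2
    · exact hjJ
  have hcard : (J \ {m.1, j}).card < q := by
    rw [card_sdiff_of_subset hsub, card_pair (Ne.symm hjm)]
    omega
  have hjmem : j ∉ J \ {m.1, j} := by simp
  have hmmem : m.1 ∉ J \ {m.1, j} := by simp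
  rcases hcomp (J \ {m.1, j}) hcard (some j) (some m.1)
      (notInOpt_some hjmem) (notInOpt_some hmmem) with h | h
  · exact h
  · by_cases hjm2 : ge (J \ {m.1, j}) (some j) (some m.1)
    · exact hjm2
    · exact absurd (⟨hjm, h, hjm2⟩ : r ⟨j, hjJ⟩ m) (hmin ⟨j, hjJ⟩ (Set.mem_univ _))
end

section
/- Suppose ≿_s satisfies PD and C_s is consistent with ≿_s. Then C_s is size monotonic: for all J ⊆ J′ ⊆ I, |C_s(J)| ≤ |C_s(J′)|. -/
open Finset

variable {I T S : Type*}

/-- The choice function `C` is consistent with the priority profile `ge = ≿ₛ`. -/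
def ConsistentP [DecidableEq I] (q : ℕ)
    (ge : Finset I → Option I → Option I → Prop) (C : Finset I → Finset I) : Prop :=
  ∀ J : Finset I,
    (∀ i ∈ C J,
      (∀ j ∈ J \ C J, ge ((C J).erase i) (some i) (some j)) ∧
        ge ((C J).erase i) (some i) none) ∧
    ((C J).card < q → (C J).card < J.card →
      ∀ j ∈ J \ C J, StrictP ge (C J) none (some j))

/-- `C` is substitutable. -/
def SubstitutableP [DecidableEq I] (C : Finset I → Finset I) : Prop :=
  ∀ (J : Finset I) (i j : I), j ∉ J → i ∈ C (insert j J) → i ∈ C J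

/-- **Lemma 4.** If `≿ₛ` satisfies PD and `Cₛ` is consistent with `≿ₛ`, then `Cₛ` is size
monotonic. -/
theorem lemma4 [DecidableEq I] [DecidableEq T] (τ : I → T) (q : ℕ)
    (ge : Finset I → Option I → Option I → Prop) (hPD : PD τ q ge)
    (C : Finset I → Finset I) (hsub : ∀ J, C J ⊆ J) (hcard : ∀ J, (C J).card ≤ q)
    (hcons : ConsistentP q ge C) :
    ∀ J J' : Finset I, J ⊆ J' → (C J).card ≤ (C J').card := by
  intro J J' hJJ'
  by_contra hlt
  push_neg at hlt
  have hqB : (C J').card < q := lt_of_lt_of_le hlt (hcard J)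
  -- find a type with strictly more members in C J than in C J'
  have hsumA : (C J).card =
      ∑ t ∈ (C J ∪ C J').image τ, ((C J).filter fun x => τ x = t).card :=
    Finset.card_eq_sum_card_fiberwise
      (fun x hx => Finset.mem_image_of_mem τ (Finset.mem_union_left _ hx))
  have hsumB : (C J').card =
      ∑ t ∈ (C J ∪ C J').image τ, ((C J').filter fun x => τ x = t).card :=
    Finset.card_eq_sum_card_fiberwise
      (fun x hx => Finset.mem_image_of_mem τ (Finset.mem_union_right _ hx))
  have hex : ∃ t ∈ (C J ∪ C J').image τ,
      ((C J').filter fun x => τ x = t).card < ((C J).filter fun x => τ x = t).card := by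
    apply Finset.exists_lt_of_sum_lt
    rw [← hsumA, ← hsumB]; exact hlt
  obtain ⟨t, -, hT⟩ := hex
  obtain ⟨i, hiA, hiB⟩ := Finset.not_subset.mp
    (fun hss => absurd (Finset.card_le_card hss) (not_le.mpr hT))
  rw [Finset.mem_filter] at hiA hiB
  have hiA' : i ∈ C J := hiA.1
  have hτ : τ i = t := hiA.2
  have hiB' : i ∉ C J' := fun h => hiB ⟨h, hτ⟩
  -- type counts
  have hcnt : tcnt τ (C J') (some i) ≤ tcnt τ ((C J).erase i) (some i) := by
    show ((C J').filter fun x => τ x = τ i).card ≤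
      (((C J).erase i).filter fun x => τ x = τ i).card
    rw [Finset.filter_erase, Finset.card_erase_of_mem (by
      rw [Finset.mem_filter]; exact ⟨hiA', rfl⟩)]
    rw [hτ]
    exact Nat.le_sub_one_of_lt hT
  have hqA : ((C J).erase i).card < q := by
    rw [Finset.card_erase_of_mem hiA']
    exact lt_of_lt_of_le (Nat.sub_lt (Finset.card_pos.mpr ⟨i, hiA'⟩) one_pos) (hcard J)
  have hni1 : NotInOpt (some i) ((C J).erase i) := by
    intro j hj
    simp only [Option.mem_def, Option.some.injEq] at hj
    subst hj
    exact Finset.notMem_erase i _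
  have hni2 : NotInOpt (some i) (C J') := by
    intro j hj
    simp only [Option.mem_def, Option.some.injEq] at hj
    subst hj; exact hiB'
  have hnone : ∀ s : Finset I, NotInOpt none s := by
    intro s j hj; simp at hj
  have h1 : ge ((C J).erase i) (some i) none := ((hcons J).1 i hiA').2
  have hpd := hPD ((C J).erase i) (C J') (some i) none hqA hqB hni1 (hnone _)
    hni2 (hnone _) hcnt (le_refl 0)
  have h2 : ge (C J') (some i) none := hpd.2 h1
  have hltJ' : (C J').card < J'.card :=
    lt_of_lt_of_le hlt (le_trans (Finset.card_le_card (hsub J)) (Finset.card_le_card hJJ'))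
  have h3 : StrictP ge (C J') none (some i) :=
    (hcons J').2 hqB hltJ' i (Finset.mem_sdiff.mpr ⟨hJJ' (hsub J hiA'), hiB'⟩)
  exact h3.2 h2
end

section
/- Suppose the scores σ_1, …, σ_{|I|} are pairwise distinct, and C_s is a choice function generated by reserves for priority determined by σ with reserve vector r satisfying Σ_t r_t ≤ q_s. Let ≿_s be the adjusted scoring rule with bonus α_t(x) = 2 if x < r_t and α_t(x) = 0 if x ≥ r_t, and threshold σ̲ < 0. Then ≿_s^J is a linear order for all J with |J| ≤ q_s − 1, and C_s is consistent with ≿_s. -/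
open Finset

variable {I T S : Type*}

/-- Adjusted score of a (possibly null) student given the assignment `J`:
`f_i(J) = σ_i + α_{τ(i)}(|J ∩ I^{τ(i)}|)` and `f_∅(J) = σ̲`. -/
noncomputable def adjF [DecidableEq T] (τ : I → T) (σ : I → ℝ) (sig : ℝ)
    (α : T → ℕ → ℝ) (J : Finset I) : Option I → ℝ
  | none => sig
  | some i => σ i + α (τ i) ((J.filter fun x => τ x = τ i).card)

/-- The adjusted scoring rule: `a ≿ₛᴶ b` iff `f_a(J) ≥ f_b(J)`. -/
def adjGe [DecidableEq T] (τ : I → T) (σ : I → ℝ) (sig : ℝ) (α : T → ℕ → ℝ)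
    (J : Finset I) (a b : Option I) : Prop :=
  adjF τ σ sig α J b ≤ adjF τ σ sig α J a

/-- **Proposition 2.** Suppose scores are pairwise distinct and `Cₛ` is generated by reserves
(for priority determined by `σ`, reserve vector `r` with `∑ₜ rₜ ≤ qₛ`). With bonus
`α_t(x) = 2` if `x < r_t` and `0` otherwise, and threshold `σ̲ < 0`, the adjusted scoring rule
`≿ₛᴶ` is a linear order for every `J` with `|J| ≤ qₛ − 1`, and `Cₛ` is consistent with it. -/
theorem proposition2 [DecidableEq I] [DecidableEq T] [Fintype T] (τ : I → T) (q : ℕ)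
    (σ : I → ℝ) (hσ : ∀ i, σ i ∈ Set.Icc (0 : ℝ) 1) (hdist : Function.Injective σ)
    (sig : ℝ) (hsig : sig < 0)
    (r : T → ℕ) (hr : ∀ t, 0 < r t) (hsum : ∑ t, r t ≤ q)
    (α : T → ℕ → ℝ) (hα : ∀ t x, α t x = if x < r t then 2 else 0)
    (C : Finset I → Finset I) (hsub : ∀ J, C J ⊆ J) (hcard : ∀ J, (C J).card ≤ q)
    -- (i): each type fills its reserve as far as possible
    (hres1 : ∀ (J : Finset I) (t : T),
      min (r t) (J.filter fun x => τ x = t).card ≤ ((C J).filter fun x => τ x = t).card)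
    -- (ii): a rejected student may beat a chosen one only across types, within the reserve
    (hres2 : ∀ J, ∀ i ∈ C J, ∀ j ∈ J \ C J, σ i < σ j →
      τ i ≠ τ j ∧ ((C J).filter fun x => τ x = τ i).card ≤ r (τ i))
    -- (iii): rejections happen only at full capacity
    (hres3 : ∀ J : Finset I, (J \ C J).Nonempty → (C J).card = q) :
    (CompleteP q (adjGe τ σ sig α) ∧ TransP q (adjGe τ σ sig α) ∧
        AntisymP q (adjGe τ σ sig α)) ∧
      ConsistentP q (adjGe τ σ sig α) C := by

  have hf_some : ∀ (J : Finset I) (i : I), adjF τ σ sig α J (some i) =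
      σ i + α (τ i) ((J.filter fun x => τ x = τ i).card) := fun _ _ => rfl
  have hf_none : ∀ J : Finset I, adjF τ σ sig α J none = sig := fun _ => rfl
  have hαnn : ∀ t x, (0:ℝ) ≤ α t x := by
    intro t x; rw [hα]; split <;> norm_num
  have hfpos : ∀ (J : Finset I) (i : I), (0:ℝ) ≤ adjF τ σ sig α J (some i) := by
    intro J i
    have h1 := (hσ i).1
    have h2 := hαnn (τ i) ((J.filter fun x => τ x = τ i).card)
    rw [hf_some]; linarith
  refine ⟨⟨?_, ?_, ?_⟩, ?_⟩
  · intro J _ a b _ _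
    exact le_total _ _
  · intro J _ a b c _ _ _ h1 h2
    exact le_trans h2 h1
  · intro J _ a b _ _ h1 h2
    have heq : adjF τ σ sig α J b = adjF τ σ sig α J a := le_antisymm h1 h2
    match a, b with
    | none, none => rfl
    | none, some i =>
      exfalso
      have := hfpos J i
      rw [hf_none] at heq; linarith [heq ▸ this]
    | some i, none =>
      exfalso
      have := hfpos J i
      rw [hf_none] at heq; linarith [heq ▸ this]
    | some i, some j =>
      have hi1 := (hσ i).1; have hi2 := (hσ i).2
      have hj1 := (hσ j).1; have hj2 := (hσ j).2
      rw [hf_some, hf_some, hα, hα] at heq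
      have : σ i = σ j := by
        split at heq <;> split at heq <;> linarith
      exact congrArg some (hdist this)
  · intro J
    have hrej : ∀ j ∈ J \ C J, r (τ j) ≤ ((C J).filter fun x => τ x = τ j).card := by
      intro j hj
      rw [Finset.mem_sdiff] at hj
      by_contra hlt
      push_neg at hlt
      have h1 := hres1 J (τ j)
      have hjn : j ∉ (C J).filter fun x => τ x = τ j :=
        fun h => hj.2 (Finset.mem_filter.1 h).1
      have hsub2 : insert j ((C J).filter fun x => τ x = τ j) ⊆
          J.filter fun x => τ x = τ j := by
        intro x hx
        rw [Finset.mem_insert] at hx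
        rcases hx with rfl | hx
        · exact Finset.mem_filter.2 ⟨hj.1, rfl⟩
        · rw [Finset.mem_filter] at hx ⊢
          exact ⟨hsub J hx.1, hx.2⟩
      have hcle := Finset.card_le_card hsub2
      rw [Finset.card_insert_of_notMem hjn] at hcle
      rw [Finset.card_filter, Finset.card_filter] at *
      omega
    constructor
    · intro i hi
      have hiJ : i ∈ J := hsub J hi
      have hcnt' : ∀ t : T, τ i ≠ t →
          (((C J).erase i).filter fun x => τ x = t) = (C J).filter fun x => τ x = t := by
        intro t ht
        rw [Finset.filter_erase]
        exact Finset.erase_eq_of_notMem (fun h => ht (Finset.mem_filter.1 h).2)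
      have hcnti : ((((C J).erase i).filter fun x => τ x = τ i).card) =
          (((C J).filter fun x => τ x = τ i).card) - 1 := by
        rw [Finset.filter_erase, Finset.card_erase_of_mem
          (show i ∈ (C J).filter (fun x => τ x = τ i) from Finset.mem_filter.2 ⟨hi, rfl⟩)]
      have hmemi : i ∈ (C J).filter fun x => τ x = τ i := Finset.mem_filter.2 ⟨hi, rfl⟩
      have hposi : 1 ≤ ((C J).filter fun x => τ x = τ i).card :=
        Finset.card_pos.2 ⟨i, hmemi⟩
      constructor
      · intro j hj
        have hjd := hj; rw [Finset.mem_sdiff] at hjd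
        have hij : i ≠ j := fun h => hjd.2 (h ▸ hi)
        have hσne : σ i ≠ σ j := fun h => hij (hdist h)
        have hi1 := (hσ i).1; have hi2 := (hσ i).2
        have hj1 := (hσ j).1; have hj2 := (hσ j).2
        show adjF τ σ sig α ((C J).erase i) (some j) ≤ adjF τ σ sig α ((C J).erase i) (some i)
        rw [hf_some, hf_some, hα, hα]
        by_cases hτ : τ i = τ j
        · -- same type: equal counts, compare scores
          have hσlt : σ j < σ i := by
            rcases lt_trichotomy (σ i) (σ j) with h | h | h
            · exact absurd hτ (hres2 J i hi j hj h).1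
            · exact absurd h hσne
            · exact h
          rw [hτ]
          split <;> linarith
        · -- different types
          have hcj : ((((C J).erase i).filter fun x => τ x = τ j).card) =
              (((C J).filter fun x => τ x = τ j).card) := by rw [hcnt' (τ j) hτ]
          have hαj : ¬ ((((C J).erase i).filter fun x => τ x = τ j).card < r (τ j)) := by
            rw [hcj]; exact not_lt.2 (hrej j hj)
          rw [if_neg hαj]
          rcases lt_trichotomy (σ i) (σ j) with h | h | h
          · have h2 := (hres2 J i hi j hj h).2
            have hαi : ((((C J).erase i).filter fun x => τ x = τ i).card < r (τ i)) := by
              rw [hcnti]; omega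
            rw [if_pos hαi]; linarith
          · exact absurd h hσne
          · split <;> linarith
      · show adjF τ σ sig α ((C J).erase i) none ≤ adjF τ σ sig α ((C J).erase i) (some i)
        rw [hf_none]
        linarith [hfpos ((C J).erase i) i]
    · intro hq _ j hj
      have := hres3 J ⟨j, hj⟩
      omega
end

section
/- Suppose ≿_s satisfies PD, WO, and DC, and let C_s^≿ be the sequentially constructed choice function for applicant set J. If student r_g is rejected at step g of the construction and |C^h(J)| < q_s for some h ≥ g, then ∅ ≻_s^{C^h(J)} r_g. -/
open Finset

variable {I T S : Type*}

section Build

variable {I : Type*} [LinearOrder I] [Fintype I]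

/-- `i` has the lowest priority within `K`: no `j ∈ K` has strictly lower priority than `i`
with the assignment `K∖{i,j}`. -/
def LowestIn [DecidableEq I] (ge : Finset I → Option I → Option I → Prop)
    (K : Finset I) (i : I) : Prop :=
  ∀ j ∈ K.erase i, ¬ StrictP ge ((K.erase i).erase j) (some i) (some j)

open scoped Classical in
/-- Processing a list of applicants one by one: an applicant is accepted while a seat remains
and she is acceptable with the current set; once capacity `q` is full, the most recently
arrived student (i.e. the one with the largest label) among those with lowest priority within
the current set plus the applicant is rejected. -/
noncomputable def buildC [DecidableEq I] (ge : Finset I → Option I → Option I → Prop)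
    (q : ℕ) : List I → Finset I → Finset I
  | [], C => C
  | a :: rest, C =>
    if C.card < q then
      if ge C (some a) none then buildC ge q rest (insert a C)
      else buildC ge q rest C
    else
      buildC ge q rest
        ((insert a C).erase
          ((((insert a C).filter (LowestIn ge (insert a C))).max).getD a))

/-- The choice function `Cₛ^≿` constructed from the priority profile `ge = ≿ₛ`, processing
the students of `J` in increasing label order. -/
noncomputable def Cchoice [DecidableEq I] (ge : Finset I → Option I → Option I → Prop)
    (q : ℕ) (J : Finset I) : Finset I :=
  buildC ge q (J.sort (· ≤ ·)) ∅

/-- The intermediate set `Cₛᵍ(J)` after the first `g` steps of the construction. -/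
noncomputable def Cstep [DecidableEq I] (ge : Finset I → Option I → Option I → Prop)
    (q : ℕ) (J : Finset I) (g : ℕ) : Finset I :=
  buildC ge q ((J.sort (· ≤ ·)).take g) ∅

end Build

section Helpers

variable {I : Type*} [LinearOrder I] [Fintype I] [DecidableEq I]

open scoped Classical

set_option linter.unusedSectionVars false

lemma buildC_append (ge : Finset I → Option I → Option I → Prop) (q : ℕ)
    (L1 L2 : List I) (C : Finset I) :
    buildC ge q (L1 ++ L2) C = buildC ge q L2 (buildC ge q L1 C) := by
  induction L1 generalizing C with
  | nil => simp [buildC]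
  | cons a l ih =>
    simp only [List.cons_append, buildC]
    split_ifs <;> apply ih

lemma buildC_subset (ge : Finset I → Option I → Option I → Prop) (q : ℕ)
    (L : List I) (C : Finset I) :
    buildC ge q L C ⊆ C ∪ L.toFinset := by
  induction L generalizing C with
  | nil => simp [buildC]
  | cons a l ih =>
    simp only [buildC]
    split_ifs with h1 h2
    · refine (ih _).trans ?_
      intro x hx
      simp only [Finset.mem_union, Finset.mem_insert, List.toFinset_cons,
        List.mem_toFinset] at *
      tauto
    · refine (ih _).trans ?_
      intro x hx
      simp only [Finset.mem_union, List.toFinset_cons, Finset.mem_insert,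
        List.mem_toFinset] at *
      tauto
    · refine (ih _).trans ?_
      intro x hx
      simp only [Finset.mem_union, Finset.mem_erase, Finset.mem_insert,
        List.toFinset_cons, List.mem_toFinset] at *
      tauto

lemma getD_max_mem (s : Finset I) (a : I) (t : Finset I) (h : s ⊆ insert a t) :
    (s.max).getD a ∈ insert a t := by
  cases hm : s.max with
  | bot => simp [hm, Option.getD]
  | coe b => exact h (Finset.mem_of_max hm)

lemma buildC_card_ge (ge : Finset I → Option I → Option I → Prop) (q : ℕ)
    (L : List I) (C : Finset I) (hnd : L.Nodup) (hd : ∀ x ∈ L, x ∉ C)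
    (hq : q ≤ C.card) : q ≤ (buildC ge q L C).card := by
  induction L generalizing C with
  | nil => simpa [buildC] using hq
  | cons a l ih =>
    have haC : a ∉ C := hd a (by simp)
    have hnlt : ¬ C.card < q := not_lt.2 hq
    simp only [buildC, if_neg hnlt]
    set e := ((((insert a C).filter (LowestIn ge (insert a C))).max).getD a) with he
    have hemem : e ∈ insert a C :=
      getD_max_mem _ a C (Finset.filter_subset _ _)
    have hcard : ((insert a C).erase e).card = C.card := by
      rw [Finset.card_erase_of_mem hemem, Finset.card_insert_of_notMem haC]
      simp
    apply ih
    · exact hnd.of_cons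
    · intro x hx hxin
      have hxa : x ≠ a := fun hxa => (List.nodup_cons.1 hnd).1 (hxa ▸ hx)
      have := Finset.mem_of_mem_erase hxin
      rcases Finset.mem_insert.1 this with h' | h'
      · exact hxa h'
      · exact hd x (by simp [hx]) h'
    · omega

lemma buildC_le_subset (ge : Finset I → Option I → Option I → Prop) (q : ℕ)
    (L : List I) (C : Finset I) (hnd : L.Nodup) (hd : ∀ x ∈ L, x ∉ C)
    (hlt : (buildC ge q L C).card < q) : C ⊆ buildC ge q L C := by
  induction L generalizing C with
  | nil => simp [buildC]
  | cons a l ih =>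
    by_cases h1 : C.card < q
    · simp only [buildC, if_pos h1] at hlt ⊢
      split_ifs at hlt ⊢ with h2
      · refine (Finset.subset_insert a C).trans (ih _ hnd.of_cons ?_ hlt)
        intro x hx hxin
        rcases Finset.mem_insert.1 hxin with h' | h'
        · exact (List.nodup_cons.1 hnd).1 (h' ▸ hx)
        · exact hd x (by simp [hx]) h'
      · exact ih _ hnd.of_cons (fun x hx => hd x (by simp [hx])) hlt
    · exfalso
      have hq : q ≤ C.card := not_lt.1 h1
      have := buildC_card_ge ge q (a :: l) C hnd hd hq
      omega

end Helpers

/-- **Claim 2.** If `≿ₛ` satisfies PD, WO and DC (with students labeled first by type and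
then by weakly decreasing within-type priority), and student `r` is rejected at the step
processing the `g`-th applicant `a` (that is, `r ∈ Cᵍ(J) ∪ {a}` but `r ∉ Cᵍ⁺¹(J)`), then for
any later stage `h > g` with `|Cʰ(J)| < qₛ` we have `∅ ≻ₛ^{Cʰ(J)} r`. -/
theorem claim2 {I : Type*} [LinearOrder I] [Fintype I] [DecidableEq I]
    (τ : I → ℕ) (q : ℕ)
    (ge : Finset I → Option I → Option I → Prop)
    (hcomp : CompleteP q ge) (htr : TransP q ge)
    (hPD : PD τ q ge) (hWO : WO τ q ge) (hDC : DC τ q ge)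
    (hτmono : ∀ i j : I, τ i < τ j → i < j)
    (hlab : ∀ J : Finset I, J.card < q → ∀ i j : I, i ∉ J → j ∉ J →
      τ i = τ j → i ≤ j → ge J (some i) (some j)) :
    ∀ (J : Finset I) (g h : ℕ) (a r : I),
      (J.sort (· ≤ ·))[g]? = some a →
      r ∈ insert a (Cstep ge q J g) → r ∉ Cstep ge q J (g + 1) →
      g < h → (Cstep ge q J h).card < q →
      StrictP ge (Cstep ge q J h) none (some r) := by
  intro J g h a r hga hr1 hr2 hgh hch
  classical
  obtain ⟨hglt, hLa⟩ := List.getElem?_eq_some_iff.1 hga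
  set L := J.sort (· ≤ ·) with hL
  set M := L.take h with hM
  have hndL : L.Nodup := Finset.sort_nodup _ _
  have hndM : M.Nodup := hndL.sublist (List.take_sublist _ _)
  have hMg : M.take g = L.take g := by
    rw [hM, List.take_take, min_eq_left (by omega)]
  have hglM : g < M.length := by rw [hM, List.length_take]; omega
  have hMa : M[g] = a := by
    have h2 : (L.take h)[g]'(by rw [List.length_take]; omega) = a := by
      rw [List.getElem_take]; exact hLa
    exact h2
  have hdropg : M.drop g = a :: M.drop (g + 1) := by
    rw [List.drop_eq_getElem_cons hglM, hMa]
  have htk : L.take (g + 1) = L.take g ++ [a] := by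
    rw [List.take_succ, hga]
    rfl
  have hsplit : L.take g ++ M.drop g = M := by
    rw [← hMg]; exact List.take_append_drop g M
  have hCh : Cstep ge q J h = buildC ge q (M.drop g) (Cstep ge q J g) := by
    have h2 := buildC_append ge q (L.take g) (M.drop g) (∅ : Finset I)
    rw [hsplit] at h2
    simpa [Cstep, ← hL, ← hM] using h2
  have hsubg : Cstep ge q J g ⊆ (L.take g).toFinset := by
    have h2 := buildC_subset ge q (L.take g) (∅ : Finset I)
    simpa [Cstep, ← hL] using h2
  have hdisj : ∀ x ∈ M.drop g, x ∉ Cstep ge q J g := by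
    intro x hx hxC
    have hnd2 : (L.take g ++ M.drop g).Nodup := by rw [hsplit]; exact hndM
    exact (List.disjoint_of_nodup_append hnd2)
      (List.mem_toFinset.1 (hsubg hxC)) hx
  have hcg : (Cstep ge q J g).card < q := by
    by_contra hcon
    have h2 := buildC_card_ge ge q (M.drop g) _
      (hndM.sublist (List.drop_sublist _ _)) hdisj (not_lt.1 hcon)
    rw [← hCh] at h2
    omega
  have hCg1 : Cstep ge q J (g + 1) = buildC ge q [a] (Cstep ge q J g) := by
    have h2 := buildC_append ge q (L.take g) [a] (∅ : Finset I)
    rw [← htk] at h2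
    simpa [Cstep, ← hL] using h2
  by_cases hacc : ge (Cstep ge q J g) (some a) none
  · exfalso
    have heq : Cstep ge q J (g + 1) = insert a (Cstep ge q J g) := by
      rw [hCg1]; simp [buildC, if_pos hcg, if_pos hacc]
    exact hr2 (heq ▸ hr1)
  · have hCeq : Cstep ge q J (g + 1) = Cstep ge q J g := by
      rw [hCg1]; simp [buildC, if_pos hcg, if_neg hacc]
    have hra : r = a := by
      rcases Finset.mem_insert.1 hr1 with h' | h'
      · exact h'
      · exact absurd h' (hCeq ▸ hr2)
    subst hra
    have haCg : r ∉ Cstep ge q J g := by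
      intro hmem
      have h1 := List.mem_toFinset.1 (hsubg hmem)
      have hnd1 : (L.take g ++ [r]).Nodup := by
        rw [← htk]; exact hndL.sublist (List.take_sublist _ _)
      exact (List.disjoint_of_nodup_append hnd1 h1) (by simp)
    have hCh' : Cstep ge q J h = buildC ge q (M.drop (g + 1)) (Cstep ge q J g) := by
      rw [hCh, hdropg]
      simp [buildC, if_pos hcg, if_neg hacc]
    have hdisj1 : ∀ x ∈ M.drop (g + 1), x ∉ Cstep ge q J g := by
      intro x hx
      exact hdisj x (by rw [hdropg]; exact List.mem_cons_of_mem _ hx)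
    have hnd1 : (M.drop (g + 1)).Nodup := hndM.sublist (List.drop_sublist _ _)
    have hsub : Cstep ge q J g ⊆ Cstep ge q J h := by
      rw [hCh']
      exact buildC_le_subset ge q _ _ hnd1 hdisj1 (by rw [← hCh']; exact hch)
    have haCh : r ∉ Cstep ge q J h := by
      intro hmem
      have h1 := buildC_subset ge q (M.drop (g + 1)) (Cstep ge q J g) (hCh' ▸ hmem)
      rcases Finset.mem_union.1 h1 with h' | h'
      · exact haCg h'
      · have hnd2 : (M.drop g).Nodup := hndM.sublist (List.drop_sublist _ _)
        rw [hdropg] at hnd2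
        exact (List.nodup_cons.1 hnd2).1 (List.mem_toFinset.1 h')
    have hstrict : StrictP ge (Cstep ge q J g) none (some r) := by
      rcases hcomp (Cstep ge q J g) hcg none (some r) (by intro i hi; simp at hi)
        (by intro i hi; simp at hi; subst hi; exact haCg) with h' | h'
      · exact ⟨h', hacc⟩
      · exact absurd h' hacc
    exact (hPD (Cstep ge q J g) (Cstep ge q J h) none (some r) hcg hch
      (by intro i hi; simp at hi) (by intro i hi; simp at hi; subst hi; exact haCg)
      (by intro i hi; simp at hi) (by intro i hi; simp at hi; subst hi; exact haCh)
      (by simp [tcnt])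
      (by simp only [tcnt]
          exact Finset.card_le_card (Finset.filter_subset_filter _ hsub))).1 hstrict
end

section
/- Suppose ≿_s satisfies PD, WO, and DC. Then the sequentially constructed choice function C_s^≿ is consistent with ≿_s: for any J ⊆ I, (1) for any i ∈ C_s^≿(J) and j ∈ (J∖C_s^≿(J)) ∪ {∅}, i ≿_s^{C_s^≿(J)∖{i}} j; and (2) if |C_s^≿(J)| < q_s and |C_s^≿(J)| < |J|, then ∅ ≻_s^{C_s^≿(J)} j for all j ∈ J∖C_s^≿(J). -/
open Finset

variable {I T S : Type*}

set_option linter.unusedSectionVars false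

namespace CCAux

variable {I : Type*} [LinearOrder I] [Fintype I] [DecidableEq I]

lemma notin_some {J : Finset I} {i : I} (h : i ∉ J) : NotInOpt (some i) J := by
  intro x hx
  simp only [Option.mem_def, Option.some.injEq] at hx
  subst hx; exact h

lemma notin_none {J : Finset I} : NotInOpt (none : Option I) J := by
  intro x hx; simp at hx

section Hyps

variable {τ : I → ℕ} {q : ℕ} {ge : Finset I → Option I → Option I → Prop}

lemma tcnt_none' (J : Finset I) : tcnt τ J (none : Option I) = 0 := rfl

lemma tcnt_mono {J J' : Finset I} (h : J ⊆ J') (a : Option I) :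
    tcnt τ J a ≤ tcnt τ J' a := by
  cases a with
  | none => exact le_refl 0
  | some i => exact Finset.card_le_card (Finset.filter_subset_filter _ h)

lemma tcnt_insert_of_ne {J : Finset I} {a i : I} (h : τ a ≠ τ i) :
    tcnt τ (insert a J) (some i) = tcnt τ J (some i) := by
  simp [tcnt, Finset.filter_insert, h]

lemma tcnt_erase_of_ne {J : Finset I} {m i : I} (h : τ m ≠ τ i) :
    tcnt τ (J.erase m) (some i) = tcnt τ J (some i) := by
  simp only [tcnt]
  rw [Finset.filter_erase, Finset.erase_eq_of_notMem (by simp [h])]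

lemma tcnt_swap_eq {J : Finset I} {m a j : I} (hm : m ∈ J) (ha : a ∉ J)
    (h1 : τ m = τ j) (h2 : τ a = τ j) :
    tcnt τ (insert a (J.erase m)) (some j) = tcnt τ J (some j) := by
  simp only [tcnt]
  have hmf : m ∈ J.filter fun x => τ x = τ j := Finset.mem_filter.mpr ⟨hm, h1⟩
  have haf : a ∉ (J.filter fun x => τ x = τ j).erase m :=
    fun h => ha (Finset.mem_filter.mp (Finset.mem_of_mem_erase h)).1
  have hpos : 0 < (J.filter fun x => τ x = τ j).card := Finset.card_pos.mpr ⟨m, hmf⟩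
  rw [Finset.filter_insert, if_pos h2, Finset.filter_erase,
    Finset.card_insert_of_notMem haf, Finset.card_erase_of_mem hmf]
  omega

/-- A bundled hypothesis pack. -/
structure Hyp (τ : I → ℕ) (q : ℕ) (ge : Finset I → Option I → Option I → Prop) : Prop where
  comp : CompleteP q ge
  tr : TransP q ge
  pd : PD τ q ge
  wo : WO τ q ge
  dc : DC τ q ge
  lab : ∀ J : Finset I, J.card < q → ∀ i j : I, i ∉ J → j ∉ J →
    τ i = τ j → i ≤ j → ge J (some i) (some j)

lemma Hyp.lowge (H : Hyp τ q ge) {J : Finset I} {a b : Option I} (hJ : J.card < q)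
    (ha : NotInOpt a J) (hb : NotInOpt b J) (h : ¬ StrictP ge J a b) : ge J b a := by
  rcases H.comp J hJ a b ha hb with h1 | h1
  · by_contra hba; exact h ⟨h1, hba⟩
  · exact h1

/-- The invariant carried through the construction. -/
structure Inv (q : ℕ) (ge : Finset I → Option I → Option I → Prop)
    (C D : Finset I) : Prop where
  disj : ∀ x ∈ C, x ∉ D
  cardle : C.card ≤ q
  accpt : ∀ i ∈ C, ge (C.erase i) (some i) none
  beats : ∀ i ∈ C, ∀ j ∈ D, ge (C.erase i) (some i) (some j)
  rej : C.card < q → ∀ j ∈ D, StrictP ge C none (some j)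


lemma accept_step (H : Hyp τ q ge) {C D : Finset I} {a : I}
    (hbound : ∀ x, x ∈ C ∨ x ∈ D → x < a)
    (hlt : C.card < q) (hacc : ge C (some a) none)
    (inv : Inv q ge C D) : Inv q ge (insert a C) D := by
  have haC : a ∉ C := fun h => lt_irrefl a (hbound a (Or.inl h))
  have haD : a ∉ D := fun h => lt_irrefl a (hbound a (Or.inr h))
  have hcardC : (insert a C).card = C.card + 1 := Finset.card_insert_of_notMem haC
  have hjC : ∀ j ∈ D, j ∉ C := fun j hj hjc => inv.disj j hjc hj
  have key : ∀ i ∈ C, ∀ b : Option I, NotInOpt b C → b ≠ some a →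
      ge (C.erase i) (some i) b →
      (StrictP ge C (some a) b ∨ SimP ge C (some a) b) →
      ge (insert a (C.erase i)) (some i) b := by
    intro i hiC b hbC hba hold hsab
    have hia : i < a := hbound i (Or.inl hiC)
    have hiCe : i ∉ C.erase i := Finset.notMem_erase _ _
    have haCe : a ∉ C.erase i := fun h => haC (Finset.mem_of_mem_erase h)
    have hcC : 1 ≤ C.card := Finset.card_pos.mpr ⟨i, hiC⟩
    have hce : (C.erase i).card = C.card - 1 := Finset.card_erase_of_mem hiC
    have hc1 : (C.erase i).card < q := by omega
    have hc2 : (insert a (C.erase i)).card < q := by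
      rw [Finset.card_insert_of_notMem haCe]; omega
    have hiS : i ∉ insert a (C.erase i) := by
      simp only [Finset.mem_insert]; push_neg; exact ⟨hia.ne, hiCe⟩
    have hbi : b ≠ some i := fun h => (h ▸ hbC) i rfl hiC
    have hbCe : NotInOpt b (C.erase i) := fun x hx hxm =>
      hbC x hx (Finset.mem_of_mem_erase hxm)
    have hbS : NotInOpt b (insert a (C.erase i)) := by
      intro x hx hxm
      rcases Finset.mem_insert.mp hxm with rfl | hxm
      · cases b with
        | none => simp at hx
        | some y =>
          simp only [Option.mem_def, Option.some.injEq] at hx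
          exact hba (by rw [hx])
      · exact hbCe x hx hxm
    by_cases hτ : τ a = τ i
    · -- DC route
      have hgeia : ge (C.erase i) (some i) (some a) :=
        H.lab _ hc1 i a hiCe haCe hτ.symm hia.le
      have hdc := H.dc (C.erase i) i a b (by omega) hia.ne hiCe haCe hbCe
        hbi hba hτ.symm hgeia
      rw [Finset.insert_erase hiC] at hdc
      rcases hsab with hst | hsi
      · exact (hdc.1 hst).1
      · exact (hdc.2.1 hsi).1
    · -- PD route
      refine (H.pd (C.erase i) (insert a (C.erase i)) (some i) b hc1 hc2
        (notin_some hiCe) hbCe (notin_some hiS) hbS ?_ ?_).2 hold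
      · rw [tcnt_insert_of_ne hτ]
      · exact tcnt_mono (Finset.subset_insert _ _) b
  have hstrj : ∀ j ∈ D, StrictP ge C (some a) (some j) := by
    intro j hj
    have hrej := inv.rej hlt j hj
    have hjC' : j ∉ C := hjC j hj
    refine ⟨H.tr C hlt (some a) none (some j) (notin_some haC) notin_none
      (notin_some hjC') hacc hrej.1, fun hja' => hrej.2 ?_⟩
    exact H.tr C hlt (some j) (some a) none (notin_some hjC') (notin_some haC)
      notin_none hja' hacc
  constructor
  · intro x hx
    rcases Finset.mem_insert.mp hx with rfl | hx
    exacts [haD, inv.disj x hx]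
  · omega
  · intro i hi
    rcases Finset.mem_insert.mp hi with rfl | hiC
    · rw [Finset.erase_insert haC]; exact hacc
    · have hia : i < a := hbound i (Or.inl hiC)
      rw [Finset.erase_insert_of_ne hia.ne']
      refine key i hiC none notin_none (by simp) (inv.accpt i hiC) ?_
      by_cases hna : ge C none (some a)
      · exact Or.inr ⟨hacc, hna⟩
      · exact Or.inl ⟨hacc, hna⟩
  · intro i hi j hj
    have hjC' : j ∉ C := hjC j hj
    have hja : j < a := hbound j (Or.inr hj)
    rcases Finset.mem_insert.mp hi with rfl | hiC
    · rw [Finset.erase_insert haC]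
      exact H.tr C hlt (some i) none (some j) (notin_some haC) notin_none
        (notin_some hjC') hacc (inv.rej hlt j hj).1
    · have hia : i < a := hbound i (Or.inl hiC)
      rw [Finset.erase_insert_of_ne hia.ne']
      exact key i hiC (some j) (notin_some hjC') (by simp [hja.ne])
        (inv.beats i hiC j hj) (Or.inl (hstrj j hj))
  · intro hlt' j hj
    have hjC' : j ∉ C := hjC j hj
    have hja : j < a := hbound j (Or.inr hj)
    have hjS : j ∉ insert a C := by
      simp only [Finset.mem_insert]; push_neg; exact ⟨hja.ne, hjC'⟩
    exact (H.pd C (insert a C) none (some j) hlt hlt' notin_none (notin_some hjC')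
      notin_none (notin_some hjS) (le_refl 0) (tcnt_mono (Finset.subset_insert _ _) _)).1
      (inv.rej hlt j hj)

lemma skip_step (H : Hyp τ q ge) {C D : Finset I} {a : I}
    (hbound : ∀ x, x ∈ C ∨ x ∈ D → x < a)
    (hlt : C.card < q) (hacc : ¬ ge C (some a) none)
    (inv : Inv q ge C D) : Inv q ge C (insert a D) := by
  have haC : a ∉ C := fun h => lt_irrefl a (hbound a (Or.inl h))
  have hstra : StrictP ge C none (some a) := by
    refine ⟨?_, hacc⟩
    rcases H.comp C hlt (some a) none (notin_some haC) notin_none with h | h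
    exacts [absurd h hacc, h]
  constructor
  · intro x hx
    simp only [Finset.mem_insert]; push_neg
    exact ⟨(hbound x (Or.inl hx)).ne, inv.disj x hx⟩
  · exact inv.cardle
  · exact inv.accpt
  · intro i hi j hj
    have hiCe : i ∉ C.erase i := Finset.notMem_erase _ _
    have haCe : a ∉ C.erase i := fun h => haC (Finset.mem_of_mem_erase h)
    have hcC : 1 ≤ C.card := Finset.card_pos.mpr ⟨i, hi⟩
    have hce : (C.erase i).card = C.card - 1 := Finset.card_erase_of_mem hi
    have hc1 : (C.erase i).card < q := by omega
    rcases Finset.mem_insert.mp hj with rfl | hjD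
    · by_cases hτ : τ i = τ j
      · exact H.lab _ hc1 i j hiCe haCe hτ (hbound i (Or.inl hi)).le
      · have h2 : ge (C.erase i) none (some j) := by
          refine (H.pd C (C.erase i) none (some j) hlt hc1 notin_none
            (notin_some haC) notin_none (notin_some haCe) (le_refl 0) ?_).2 hstra.1
          rw [tcnt_erase_of_ne hτ]
        exact H.tr (C.erase i) hc1 (some i) none (some j) (notin_some hiCe)
          notin_none (notin_some haCe) (inv.accpt i hi) h2
    · exact inv.beats i hi j hjD
  · intro hlt' j hj
    rcases Finset.mem_insert.mp hj with rfl | hjD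
    exacts [hstra, inv.rej hlt j hjD]

lemma TR_lemma (H : Hyp τ q ge) {W : Finset I} {x y z : I}
    (hxW : x ∉ W) (hyW : y ∉ W) (hzW : z ∉ W)
    (hxy : x ≠ y) (hxz : x ≠ z) (hyz : y ≠ z)
    (hcard : W.card + 1 < q)
    (h1 : StrictP ge (insert z W) (some x) (some y))
    (h2 : StrictP ge (insert x W) (some y) (some z)) :
    StrictP ge (insert y W) (some x) (some z) := by
  have hW : W.card < q := by omega
  have hcz : (insert z W).card < q := lt_of_le_of_lt (Finset.card_insert_le _ _) hcard
  have hcx : (insert x W).card < q := lt_of_le_of_lt (Finset.card_insert_le _ _) hcard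
  have hcy : (insert y W).card < q := lt_of_le_of_lt (Finset.card_insert_le _ _) hcard
  have hxz' : x ∉ insert z W := by
    simp only [Finset.mem_insert]; push_neg; exact ⟨hxz, hxW⟩
  have hyz' : y ∉ insert z W := by
    simp only [Finset.mem_insert]; push_neg; exact ⟨hyz, hyW⟩
  have hyx' : y ∉ insert x W := by
    simp only [Finset.mem_insert]; push_neg; exact ⟨Ne.symm hxy, hyW⟩
  have hzx' : z ∉ insert x W := by
    simp only [Finset.mem_insert]; push_neg; exact ⟨fun h => hxz h.symm, hzW⟩
  have hxy' : x ∉ insert y W := by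
    simp only [Finset.mem_insert]; push_neg; exact ⟨hxy, hxW⟩
  have hzy' : z ∉ insert y W := by
    simp only [Finset.mem_insert]; push_neg; exact ⟨fun h => hyz h.symm, hzW⟩
  by_cases hτxy : τ x = τ y <;> by_cases hτyz : τ y = τ z
  · -- all same type
    have s1 : StrictP ge W (some x) (some y) :=
      (H.wo (insert z W) W x y hcz hW hxz' hyz' hxW hyW hτxy).1 h1
    have s2 : StrictP ge W (some y) (some z) :=
      (H.wo (insert x W) W y z hcx hW hyx' hzx' hyW hzW hτyz).1 h2
    have s3 : StrictP ge W (some x) (some z) := by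
      refine ⟨H.tr W hW (some x) (some y) (some z) (notin_some hxW) (notin_some hyW)
        (notin_some hzW) s1.1 s2.1, fun h => s2.2 ?_⟩
      exact H.tr W hW (some z) (some x) (some y) (notin_some hzW) (notin_some hxW)
        (notin_some hyW) h s1.1
    exact (H.wo W (insert y W) x z hW hcy hxW hzW hxy' hzy' (hτxy.trans hτyz)).1 s3
  · -- τ x = τ y ≠ τ z
    have hxyl : x < y := by
      rcases lt_trichotomy x y with h | h | h
      · exact h
      · exact absurd h hxy
      · exact absurd (H.lab (insert z W) hcz y x hyz' hxz' hτxy.symm h.le) h1.2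
    have hgexy : ge W (some x) (some y) := H.lab W hW x y hxW hyW hτxy hxyl.le
    exact (H.dc W x y (some z) hcard hxy hxW hyW (notin_some hzW)
      (by simp [Ne, hxz.symm]) (by simp [Ne, hyz.symm]) hτxy hgexy).1 h2
  · -- τ y = τ z ≠ τ x
    have hτxz : τ x ≠ τ z := fun h => hτxy (h.trans hτyz.symm)
    have hyzl : y < z := by
      rcases lt_trichotomy y z with h | h | h
      · exact h
      · exact absurd h hyz
      · exact absurd (H.lab (insert x W) hcx z y hzx' hyx' hτyz.symm h.le) h2.2
    have hgeyz : ge W (some y) (some z) := H.lab W hW y z hyW hzW hτyz hyzl.le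
    have hdc := H.dc W y z (some x) hcard hyz hyW hzW (notin_some hxW)
      (by simp [Ne, hxy]) (by simp [Ne, hxz]) hτyz hgeyz
    have hgxz : ge (insert y W) (some x) (some z) := by
      by_contra h
      have hzx : ge (insert y W) (some z) (some x) := by
        rcases H.comp (insert y W) hcy (some x) (some z) (notin_some hxy')
          (notin_some hzy') with h' | h'
        exacts [absurd h' h, h']
      have := hdc.1 ⟨hzx, h⟩
      exact this.2 h1.1
    refine ⟨hgxz, fun hzx => ?_⟩
    exact h1.2 (hdc.2.1 ⟨hzx, hgxz⟩).1
  · by_cases hτxz : τ x = τ z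
    · -- τ x = τ z ≠ τ y : contradiction
      exfalso
      rcases lt_trichotomy x z with h | h | h
      · have hgexz : ge W (some x) (some z) := H.lab W hW x z hxW hzW hτxz h.le
        have hdc := H.dc W x z (some y) hcard hxz hxW hzW (notin_some hyW)
          (by simp [Ne, hxy.symm]) (by simp [Ne, hyz]) hτxz hgexz
        exact (hdc.2.2 h2).2 h1.1
      · exact hxz h
      · have hgezx : ge W (some z) (some x) := H.lab W hW z x hzW hxW hτxz.symm h.le
        have hdc := H.dc W z x (some y) hcard (Ne.symm hxz) hzW hxW (notin_some hyW)
          (by simp [Ne, hyz]) (by simp [Ne, hxy.symm]) hτxz.symm hgezx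
        exact h2.2 (hdc.1 h1).1
    · -- all types distinct
      have hτzy : τ z ≠ τ y := fun h => hτyz h.symm
      have s1 : StrictP ge W (some x) (some y) :=
        (H.pd (insert z W) W (some x) (some y) hcz hW (notin_some hxz')
          (notin_some hyz') (notin_some hxW) (notin_some hyW)
          (tcnt_mono (Finset.subset_insert _ _) _)
          (le_of_eq (tcnt_insert_of_ne hτzy))).1 h1
      have s2 : StrictP ge W (some y) (some z) :=
        (H.pd (insert x W) W (some y) (some z) hcx hW (notin_some hyx')
          (notin_some hzx') (notin_some hyW) (notin_some hzW)
          (tcnt_mono (Finset.subset_insert _ _) _)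
          (le_of_eq (tcnt_insert_of_ne hτxz))).1 h2
      have s3 : StrictP ge W (some x) (some z) := by
        refine ⟨H.tr W hW (some x) (some y) (some z) (notin_some hxW) (notin_some hyW)
          (notin_some hzW) s1.1 s2.1, fun h => s2.2 ?_⟩
        exact H.tr W hW (some z) (some x) (some y) (notin_some hzW) (notin_some hxW)
          (notin_some hyW) h s1.1
      exact (H.pd W (insert y W) (some x) (some z) hW hcy (notin_some hxW)
        (notin_some hzW) (notin_some hxy') (notin_some hzy')
        (le_of_eq (tcnt_insert_of_ne (fun h => hτxy h.symm)))
        (tcnt_mono (Finset.subset_insert _ _) _)).1 s3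


lemma exists_lowest {α : Type*} [DecidableEq α] (s : α → α → Prop) (K : Finset α)
    (hne : K.Nonempty)
    (htrans : ∀ x ∈ K, ∀ y ∈ K, ∀ z ∈ K, s x y → s y z → s x z)
    (hasym : ∀ x ∈ K, ∀ y ∈ K, s x y → ¬ s y x) :
    ∃ m ∈ K, ∀ j ∈ K, ¬ s m j := by
  classical
  obtain ⟨m, hmK, hmin⟩ := K.exists_min_image (fun u => (K.filter fun v => s u v).card) hne
  refine ⟨m, hmK, fun j hjK hsmj => ?_⟩
  have hsub : K.filter (fun v => s j v) ⊆ (K.filter fun v => s m v).erase j := by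
    intro v hv
    rcases Finset.mem_filter.mp hv with ⟨hvK, hsv⟩
    exact Finset.mem_erase.mpr ⟨fun h => hasym j hjK j hjK (h ▸ hsv) (h ▸ hsv),
      Finset.mem_filter.mpr ⟨hvK, htrans m hmK j hjK v hvK hsmj hsv⟩⟩
  have hmem : j ∈ K.filter fun v => s m v := Finset.mem_filter.mpr ⟨hjK, hsmj⟩
  have h1 : (K.filter fun v => s j v).card ≤ (K.filter fun v => s m v).card - 1 := by
    calc (K.filter fun v => s j v).card ≤ ((K.filter fun v => s m v).erase j).card :=
          Finset.card_le_card hsub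
      _ = (K.filter fun v => s m v).card - 1 := Finset.card_erase_of_mem hmem
  have h2 : 1 ≤ (K.filter fun v => s m v).card := Finset.card_pos.mpr ⟨j, hmem⟩
  have h3 := hmin j hjK
  omega

open scoped Classical in
lemma lowest_spec (H : Hyp τ q ge) {C : Finset I} {a : I}
    (hfull : C.card = q) (haC : a ∉ C) :
    (((insert a C).filter (LowestIn ge (insert a C))).max.getD a ∈ insert a C ∧
      LowestIn ge (insert a C)
        (((insert a C).filter (LowestIn ge (insert a C))).max.getD a)) ∧
      ∀ m' ∈ insert a C, LowestIn ge (insert a C) m' →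
        m' ≤ ((insert a C).filter (LowestIn ge (insert a C))).max.getD a := by
  set K := insert a C with hK
  have hKcard : K.card = q + 1 := by rw [hK, Finset.card_insert_of_notMem haC, hfull]
  set s : I → I → Prop := fun u v => u ≠ v ∧ StrictP ge ((K.erase u).erase v) (some u) (some v)
    with hs
  have hasym : ∀ x ∈ K, ∀ y ∈ K, s x y → ¬ s y x := by
    rintro x hx y hy ⟨hxy, hstr⟩ ⟨-, hstr'⟩
    rw [Finset.erase_right_comm] at hstr'
    exact hstr.2 hstr'.1
  have htrans : ∀ x ∈ K, ∀ y ∈ K, ∀ z ∈ K, s x y → s y z → s x z := by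
    rintro x hxK y hyK z hzK ⟨hxy, sxy⟩ ⟨hyz, syz⟩
    by_cases hxz : x = z
    · subst hxz
      rw [Finset.erase_right_comm] at syz
      exact absurd syz.1 sxy.2
    · refine ⟨hxz, ?_⟩
      have hzin : z ∈ (K.erase x).erase y :=
        Finset.mem_erase.mpr ⟨Ne.symm hyz, Finset.mem_erase.mpr ⟨Ne.symm hxz, hzK⟩⟩
      have hxin : x ∈ (K.erase y).erase z :=
        Finset.mem_erase.mpr ⟨hxz, Finset.mem_erase.mpr ⟨hxy, hxK⟩⟩
      have hyin : y ∈ (K.erase x).erase z :=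
        Finset.mem_erase.mpr ⟨hyz, Finset.mem_erase.mpr ⟨Ne.symm hxy, hyK⟩⟩
      have hymem : y ∈ K.erase x := Finset.mem_erase.mpr ⟨Ne.symm hxy, hyK⟩
      set W := ((K.erase x).erase y).erase z with hW
      have e1 : insert z W = (K.erase x).erase y := Finset.insert_erase hzin
      have e2 : insert x W = (K.erase y).erase z := by
        have hww : W = ((K.erase y).erase z).erase x := by
          ext t; simp only [hW, Finset.mem_erase]; tauto
        rw [hww]; exact Finset.insert_erase hxin
      have e3 : insert y W = (K.erase x).erase z := by
        have hww : W = ((K.erase x).erase z).erase y := by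
          ext t; simp only [hW, Finset.mem_erase]; tauto
        rw [hww]; exact Finset.insert_erase hyin
      have hcard3 : 3 ≤ K.card := by
        have hsub : {x, y, z} ⊆ K := by
          intro t ht
          simp only [Finset.mem_insert, Finset.mem_singleton] at ht
          rcases ht with rfl | rfl | rfl <;> assumption
        have h3 : ({x, y, z} : Finset I).card = 3 := by
          rw [Finset.card_insert_of_notMem (by simp [hxy, hxz]),
            Finset.card_insert_of_notMem (by simp [hyz]), Finset.card_singleton]
        have := Finset.card_le_card hsub
        omega
      have c1 : (K.erase x).card = K.card - 1 := Finset.card_erase_of_mem hxK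
      have c2 : ((K.erase x).erase y).card = (K.erase x).card - 1 :=
        Finset.card_erase_of_mem hymem
      have c3 : W.card = ((K.erase x).erase y).card - 1 := Finset.card_erase_of_mem hzin
      have hWq : W.card + 1 < q := by omega
      have hxW : x ∉ W := by simp [hW, Finset.mem_erase]
      have hyW : y ∉ W := by simp [hW, Finset.mem_erase]
      have hzW : z ∉ W := by simp [hW, Finset.mem_erase]
      have := TR_lemma H hxW hyW hzW hxy hxz hyz hWq
        (by rw [e1]; exact sxy) (by rw [e2]; exact syz)
      rw [e3] at this
      exact this
  obtain ⟨m₀, hm₀K, hmin⟩ := exists_lowest s K ⟨a, Finset.mem_insert_self a C⟩ htrans hasym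
  have hm₀low : LowestIn ge K m₀ := by
    intro j hj hstr
    exact hmin j (Finset.mem_of_mem_erase hj) ⟨(Finset.ne_of_mem_erase hj).symm, hstr⟩
  have hFne : (K.filter (LowestIn ge K)).Nonempty :=
    ⟨m₀, Finset.mem_filter.mpr ⟨hm₀K, hm₀low⟩⟩
  have hgetD : (K.filter (LowestIn ge K)).max.getD a = (K.filter (LowestIn ge K)).max' hFne := by
    rw [← Finset.coe_max' hFne]; rfl
  rw [hgetD]
  refine ⟨⟨(Finset.mem_filter.mp (Finset.max'_mem _ hFne)).1,
    (Finset.mem_filter.mp (Finset.max'_mem _ hFne)).2⟩, ?_⟩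
  intro m' hm' hlow
  exact Finset.le_max' _ m' (Finset.mem_filter.mpr ⟨hm', hlow⟩)


open scoped Classical in
set_option maxHeartbeats 2000000 in
lemma full_step (H : Hyp τ q ge) {C D : Finset I} {a m : I}
    (hbound : ∀ x, x ∈ C ∨ x ∈ D → x < a)
    (hfull : C.card = q)
    (hmK : m ∈ insert a C)
    (hmlow : LowestIn ge (insert a C) m)
    (hmmax : ∀ m' ∈ insert a C, LowestIn ge (insert a C) m' → m' ≤ m)
    (inv : Inv q ge C D) :
    Inv q ge ((insert a C).erase m) (insert m D) := by
  have haC : a ∉ C := fun h => lt_irrefl a (hbound a (Or.inl h))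
  have haD : a ∉ D := fun h => lt_irrefl a (hbound a (Or.inr h))
  have hjC : ∀ j ∈ D, j ∉ C := fun j hj hjc => inv.disj j hjc hj
  have hKcard : (insert a C).card = q + 1 := by rw [Finset.card_insert_of_notMem haC, hfull]
  have hLW : ∀ j ∈ (insert a C).erase m, ge (((insert a C).erase m).erase j) (some j) (some m) := by
    intro j hj
    have hnm := hmlow j hj
    have hjK : j ∈ (insert a C) := Finset.mem_of_mem_erase hj
    have hjm : j ≠ m := Finset.ne_of_mem_erase hj
    have c1 : ((insert a C).erase m).card = q := by rw [Finset.card_erase_of_mem hmK]; omega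
    have c2 : (((insert a C).erase m).erase j).card = q - 1 := by rw [Finset.card_erase_of_mem hj]; omega
    have hq1 : 1 ≤ q := by
      have : 1 < (insert a C).card := Finset.one_lt_card.mpr ⟨m, hmK, j, hjK, Ne.symm hjm⟩
      omega
    exact H.lowge (by omega)
      (notin_some fun h => Finset.notMem_erase m (insert a C) (Finset.mem_of_mem_erase h))
      (notin_some (Finset.notMem_erase j _)) hnm
  by_cases hma : m = a
  · have hEC : (insert a C).erase m = C := by rw [hma]; exact Finset.erase_insert haC
    rw [hEC]
    constructor
    · intro x hx
      simp only [Finset.mem_insert]; push_neg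
      exact ⟨fun h => haC (hma ▸ h ▸ hx), inv.disj x hx⟩
    · exact hfull.le
    · exact inv.accpt
    · intro i hi j hj
      rcases Finset.mem_insert.mp hj with rfl | hjD
      · have hi' : i ∈ (insert a C).erase j := by rw [hEC]; exact hi
        have := hLW i hi'
        rw [hEC] at this
        exact this
      · exact inv.beats i hi j hjD
    · intro h
      exact absurd h (by omega)
  · have hmC : m ∈ C := by rcases Finset.mem_insert.mp hmK with h | h; exacts [absurd h hma, h]
    have hq1 : 1 ≤ q := by have := Finset.card_pos.mpr ⟨m, hmC⟩; omega
    have hma' : m < a := hbound m (Or.inl hmC)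
    have ham : a ≠ m := fun h => hma h.symm
    have haK : a ∈ (insert a C) := Finset.mem_insert_self a C
    have hτam : τ a ≠ τ m := by
      intro hτ
      have hlowa : LowestIn ge (insert a C) a := by
        intro j hjKe hstr
        have hjK : j ∈ (insert a C) := Finset.mem_of_mem_erase hjKe
        have hja : j ≠ a := Finset.ne_of_mem_erase hjKe
        by_cases hjm : j = m
        · subst hjm
          have hmm : j ∈ (insert a C).erase a := Finset.mem_erase.mpr ⟨hma, hjK⟩
          have hc1 : ((insert a C).erase a).card = q := by rw [Finset.card_erase_of_mem haK]; omega
          have hc2 : (((insert a C).erase a).erase j).card = q - 1 := by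
            rw [Finset.card_erase_of_mem hmm]; omega
          exact hstr.2 (H.lab _ (by omega) j a
            (Finset.notMem_erase j _)
            (fun h => Finset.notMem_erase a (insert a C) (Finset.mem_of_mem_erase h))
            hτ.symm hma'.le)
        · set J0 := (((insert a C).erase m).erase a).erase j with hJ0
          have hain : a ∈ (insert a C).erase m := Finset.mem_erase.mpr ⟨ham, haK⟩
          have hjin : j ∈ ((insert a C).erase m).erase a := Finset.mem_erase.mpr
            ⟨hja, Finset.mem_erase.mpr ⟨hjm, hjK⟩⟩
          have c1 : ((insert a C).erase m).card = q := by rw [Finset.card_erase_of_mem hmK]; omega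
          have c2 : (((insert a C).erase m).erase a).card = q - 1 := by
            rw [Finset.card_erase_of_mem hain]; omega
          have c3 : J0.card = q - 2 := by
            rw [hJ0, Finset.card_erase_of_mem hjin]; omega
          have hq2 : 2 ≤ q := by
            have := Finset.card_pos.mpr ⟨j, hjin⟩; omega
          have hmJ0 : m ∉ J0 := by simp [hJ0, Finset.mem_erase]
          have haJ0 : a ∉ J0 := by simp [hJ0, Finset.mem_erase]
          have hjJ0 : j ∉ J0 := by simp [hJ0, Finset.mem_erase]
          have hgema : ge J0 (some m) (some a) :=
            H.lab J0 (by omega) m a hmJ0 haJ0 hτ.symm hma'.le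
          have hdc := H.dc J0 m a (some j) (by omega) hma hmJ0 haJ0
            (notin_some hjJ0) (by simp [hjm]) (by simp [hja]) hτ.symm hgema
          have em : insert m J0 = ((insert a C).erase a).erase j := by
            have hj0 : J0 = (((insert a C).erase a).erase j).erase m := by
              ext t; simp only [hJ0, Finset.mem_erase]; tauto
            rw [hj0]
            exact Finset.insert_erase (Finset.mem_erase.mpr
              ⟨Ne.symm hjm, Finset.mem_erase.mpr ⟨hma, hmK⟩⟩)
          have ea : insert a J0 = ((insert a C).erase m).erase j := by
            have hj0 : J0 = (((insert a C).erase m).erase j).erase a := by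
              ext t; simp only [hJ0, Finset.mem_erase]; tauto
            rw [hj0]
            exact Finset.insert_erase (Finset.mem_erase.mpr ⟨Ne.symm hja, hain⟩)
          have := hdc.1 (by rw [em]; exact hstr)
          rw [ea] at this
          exact hmlow j (Finset.mem_erase.mpr ⟨hjm, hjK⟩) this
      exact absurd (hmmax a haK hlowa) (not_le.mpr hma')
    have hEa : ((insert a C).erase m).erase a = C.erase m := by
      rw [Finset.erase_right_comm, Finset.erase_insert haC]
    have haKe : a ∈ (insert a C).erase m := Finset.mem_erase.mpr ⟨ham, haK⟩
    have hcCm : (C.erase m).card = q - 1 := by rw [Finset.card_erase_of_mem hmC, hfull]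
    have haCm : a ∉ C.erase m := fun h => haC (Finset.mem_of_mem_erase h)
    have haNone : ge (C.erase m) (some a) none := by
      have h1 := hLW a haKe
      rw [hEa] at h1
      exact H.tr (C.erase m) (by omega) (some a) (some m) none
        (notin_some haCm) (notin_some (Finset.notMem_erase m C)) notin_none h1
        (inv.accpt m hmC)
    have haBeats : ∀ j ∈ D, ge (C.erase m) (some a) (some j) := by
      intro j hj
      have h1 := hLW a haKe
      rw [hEa] at h1
      exact H.tr (C.erase m) (by omega) (some a) (some m) (some j)
        (notin_some haCm) (notin_some (Finset.notMem_erase m C))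
        (notin_some fun h => hjC j hj (Finset.mem_of_mem_erase h)) h1
        (inv.beats m hmC j hj)
    constructor
    · intro x hx
      have hxm : x ≠ m := Finset.ne_of_mem_erase hx
      have hxK : x ∈ (insert a C) := Finset.mem_of_mem_erase hx
      simp only [Finset.mem_insert]; push_neg
      refine ⟨hxm, ?_⟩
      rcases Finset.mem_insert.mp hxK with rfl | hxC
      exacts [haD, inv.disj x hxC]
    · rw [Finset.card_erase_of_mem hmK]; omega
    · intro i hi
      have hiK : i ∈ (insert a C) := Finset.mem_of_mem_erase hi
      have him : i ≠ m := Finset.ne_of_mem_erase hi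
      rcases Finset.mem_insert.mp hiK with rfl | hiC
      · rw [hEa]; exact haNone
      · have hia : i < a := hbound i (Or.inl hiC)
        have hm_in : m ∈ C.erase i := Finset.mem_erase.mpr ⟨Ne.symm him, hmC⟩
        have haCi : a ∉ C.erase i := fun h => haC (Finset.mem_of_mem_erase h)
        have haCim : a ∉ (C.erase i).erase m := fun h => haCi (Finset.mem_of_mem_erase h)
        have hiCim : i ∉ (C.erase i).erase m :=
          fun h => Finset.notMem_erase i C (Finset.mem_of_mem_erase h)
        set S := insert a ((C.erase i).erase m) with hS
        have hSeq : ((insert a C).erase m).erase i = S := by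
          rw [Finset.erase_insert_of_ne ham, Finset.erase_insert_of_ne hia.ne',
            Finset.erase_right_comm]
        have hcCi : (C.erase i).card = q - 1 := by rw [Finset.card_erase_of_mem hiC, hfull]
        have hcCim : ((C.erase i).erase m).card = q - 2 := by
          rw [Finset.card_erase_of_mem hm_in]; omega
        have hq2 : 2 ≤ q := by have := Finset.card_pos.mpr ⟨m, hm_in⟩; omega
        have hcS : S.card = q - 1 := by
          rw [hS, Finset.card_insert_of_notMem haCim]; omega
        have hiS : i ∉ S := by
          rw [hS]; simp only [Finset.mem_insert]; push_neg; exact ⟨hia.ne, hiCim⟩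
        have hmS : m ∉ S := by
          rw [hS]; simp only [Finset.mem_insert]; push_neg
          exact ⟨hma, Finset.notMem_erase m _⟩
        rw [hSeq]
        have h1 : ge S (some i) (some m) := by
          have := hLW i hi; rw [hSeq] at this; exact this
        have h2 : ge S (some m) none := by
          refine (H.pd (C.erase m) S (some m) none (by omega) (by omega)
            (notin_some (Finset.notMem_erase m C)) notin_none (notin_some hmS)
            notin_none ?_ (le_refl 0)).2 (inv.accpt m hmC)
          rw [hS, tcnt_insert_of_ne hτam]
          exact tcnt_mono (Finset.erase_subset_erase m (Finset.erase_subset i C)) _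
        exact H.tr S (by omega) (some i) (some m) none (notin_some hiS)
          (notin_some hmS) notin_none h1 h2
    · intro i hi j hj
      have hiK : i ∈ (insert a C) := Finset.mem_of_mem_erase hi
      have him : i ≠ m := Finset.ne_of_mem_erase hi
      rcases Finset.mem_insert.mp hj with rfl | hjD
      · exact hLW i hi
      · have hjC' : j ∉ C := hjC j hjD
        have hja : j < a := hbound j (Or.inr hjD)
        have hjm : j ≠ m := fun h => hjC' (h ▸ hmC)
        rcases Finset.mem_insert.mp hiK with rfl | hiC
        · rw [hEa]; exact haBeats j hjD
        · have hji : j ≠ i := fun h => hjC' (h ▸ hiC)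
          have hia : i < a := hbound i (Or.inl hiC)
          have hm_in : m ∈ C.erase i := Finset.mem_erase.mpr ⟨Ne.symm him, hmC⟩
          have haCi : a ∉ C.erase i := fun h => haC (Finset.mem_of_mem_erase h)
          have haCim : a ∉ (C.erase i).erase m := fun h => haCi (Finset.mem_of_mem_erase h)
          have hiCim : i ∉ (C.erase i).erase m :=
            fun h => Finset.notMem_erase i C (Finset.mem_of_mem_erase h)
          have hjCi : j ∉ C.erase i := fun h => hjC' (Finset.mem_of_mem_erase h)
          have hjCim : j ∉ (C.erase i).erase m := fun h => hjCi (Finset.mem_of_mem_erase h)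
          set S := insert a ((C.erase i).erase m) with hS
          have hSeq : ((insert a C).erase m).erase i = S := by
            rw [Finset.erase_insert_of_ne ham, Finset.erase_insert_of_ne hia.ne',
              Finset.erase_right_comm]
          have hcCi : (C.erase i).card = q - 1 := by rw [Finset.card_erase_of_mem hiC, hfull]
          have hcCim : ((C.erase i).erase m).card = q - 2 := by
            rw [Finset.card_erase_of_mem hm_in]; omega
          have hq2 : 2 ≤ q := by have := Finset.card_pos.mpr ⟨m, hm_in⟩; omega
          have hcS : S.card = q - 1 := by
            rw [hS, Finset.card_insert_of_notMem haCim]; omega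
          have hiS : i ∉ S := by
            rw [hS]; simp only [Finset.mem_insert]; push_neg; exact ⟨hia.ne, hiCim⟩
          have hmS : m ∉ S := by
            rw [hS]; simp only [Finset.mem_insert]; push_neg
            exact ⟨hma, Finset.notMem_erase m _⟩
          have hjS : j ∉ S := by
            rw [hS]; simp only [Finset.mem_insert]; push_neg; exact ⟨hja.ne, hjCim⟩
          rw [hSeq]
          by_cases hτij : τ i = τ j
          · exact (H.wo (C.erase i) S i j (by omega) (by omega)
              (Finset.notMem_erase i C) hjCi hiS hjS hτij).2 (inv.beats i hiC j hjD)
          · by_cases hτai : τ a = τ i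
            · have hgia : ge ((C.erase i).erase m) (some i) (some a) :=
                H.lab _ (by omega) i a hiCim haCim hτai.symm hia.le
              have hdc := H.dc ((C.erase i).erase m) i a (some j) (by omega) hia.ne
                hiCim haCim (notin_some hjCim) (by simp [hji]) (by simp [hja.ne])
                hτai.symm hgia
              have hins : insert i ((C.erase i).erase m) = C.erase m := by
                rw [Finset.erase_right_comm]
                exact Finset.insert_erase (Finset.mem_erase.mpr ⟨him, hiC⟩)
              rw [hins] at hdc
              have hprem : ge (C.erase m) (some a) (some j) := haBeats j hjD
              by_cases hja' : ge (C.erase m) (some j) (some a)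
              · exact (hdc.2.1 ⟨hprem, hja'⟩).1
              · exact (hdc.1 ⟨hprem, hja'⟩).1
            · by_cases hτmj : τ m = τ j
              · by_cases hτaj : τ a = τ j
                · refine (H.pd (C.erase i) S (some i) (some j) (by omega) (by omega)
                    (notin_some (Finset.notMem_erase i C)) (notin_some hjCi)
                    (notin_some hiS) (notin_some hjS) ?_ ?_).2 (inv.beats i hiC j hjD)
                  · rw [hS, tcnt_insert_of_ne hτai]
                    exact tcnt_mono (Finset.erase_subset _ _) _
                  · rw [hS]
                    exact (tcnt_swap_eq hm_in haCi hτmj hτaj).ge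
                · have h1 : ge S (some i) (some m) := by
                    have := hLW i hi; rw [hSeq] at this; exact this
                  have hjCm : j ∉ C.erase m := fun h => hjC' (Finset.mem_of_mem_erase h)
                  have h2 : ge S (some m) (some j) := by
                    refine (H.pd (C.erase m) S (some m) (some j) (by omega) (by omega)
                      (notin_some (Finset.notMem_erase m C)) (notin_some hjCm)
                      (notin_some hmS) (notin_some hjS) ?_ ?_).2 (inv.beats m hmC j hjD)
                    · rw [hS, tcnt_insert_of_ne hτam]
                      exact tcnt_mono (Finset.erase_subset_erase m (Finset.erase_subset i C)) _
                    · rw [hS]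
                      have heq : tcnt τ ((C.erase i).erase m) (some j)
                          = tcnt τ (C.erase m) (some j) := by
                        rw [Finset.erase_right_comm]
                        exact tcnt_erase_of_ne hτij
                      calc tcnt τ (C.erase m) (some j) = _ := heq.symm
                        _ ≤ tcnt τ (insert a ((C.erase i).erase m)) (some j) :=
                          tcnt_mono (Finset.subset_insert _ _) _
                  exact H.tr S (by omega) (some i) (some m) (some j) (notin_some hiS)
                    (notin_some hmS) (notin_some hjS) h1 h2
              · refine (H.pd (C.erase i) S (some i) (some j) (by omega) (by omega)
                  (notin_some (Finset.notMem_erase i C)) (notin_some hjCi)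
                  (notin_some hiS) (notin_some hjS) ?_ ?_).2 (inv.beats i hiC j hjD)
                · rw [hS, tcnt_insert_of_ne hτai]
                  exact tcnt_mono (Finset.erase_subset _ _) _
                · rw [hS]
                  have heq : tcnt τ ((C.erase i).erase m) (some j)
                      = tcnt τ (C.erase i) (some j) := tcnt_erase_of_ne hτmj
                  calc tcnt τ (C.erase i) (some j) = _ := heq.symm
                    _ ≤ tcnt τ (insert a ((C.erase i).erase m)) (some j) :=
                      tcnt_mono (Finset.subset_insert _ _) _
    · intro h
      have : ((insert a C).erase m).card = q := by rw [Finset.card_erase_of_mem hmK]; omega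
      rw [this] at h
      exact absurd h (lt_irrefl q)


open scoped Classical in
lemma buildC_main (H : Hyp τ q ge) :
    ∀ (L : List I) (C D : Finset I), L.Pairwise (· < ·) →
      (∀ b ∈ L, ∀ x, (x ∈ C ∨ x ∈ D) → x < b) →
      Inv q ge C D →
      ∃ D', Inv q ge (buildC ge q L C) D' ∧
        buildC ge q L C ∪ D' = (C ∪ D) ∪ L.toFinset := by
  intro L
  induction L with
  | nil =>
    intro C D _ _ inv
    exact ⟨D, by simpa [buildC] using inv, by simp [buildC]⟩
  | cons a rest ih =>
    intro C D hsort hb inv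
    have hsa : ∀ b ∈ rest, a < b := fun b hb' => (List.pairwise_cons.mp hsort).1 b hb'
    have hsrest : rest.Pairwise (· < ·) := (List.pairwise_cons.mp hsort).2
    have hba : ∀ x, (x ∈ C ∨ x ∈ D) → x < a := fun x hx => hb a (by simp) x hx
    have haC : a ∉ C := fun h => lt_irrefl a (hba a (Or.inl h))
    rw [buildC]
    by_cases h1 : C.card < q
    · by_cases h2 : ge C (some a) none
      · rw [if_pos h1, if_pos h2]
        obtain ⟨D', hinv, hun⟩ := ih (insert a C) D hsrest
          (fun b hb' x hx => by
            rcases hx with hx | hx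
            · rcases Finset.mem_insert.mp hx with rfl | hx
              · exact hsa b hb'
              · exact lt_trans (hba x (Or.inl hx)) (hsa b hb')
            · exact lt_trans (hba x (Or.inr hx)) (hsa b hb'))
          (accept_step H hba h1 h2 inv)
        refine ⟨D', hinv, ?_⟩
        rw [hun]
        ext t
        simp only [Finset.mem_union, Finset.mem_insert, List.toFinset_cons,
          List.mem_toFinset]
        tauto
      · rw [if_pos h1, if_neg h2]
        obtain ⟨D', hinv, hun⟩ := ih C (insert a D) hsrest
          (fun b hb' x hx => by
            rcases hx with hx | hx
            · exact lt_trans (hba x (Or.inl hx)) (hsa b hb')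
            · rcases Finset.mem_insert.mp hx with rfl | hx
              · exact hsa b hb'
              · exact lt_trans (hba x (Or.inr hx)) (hsa b hb'))
          (skip_step H hba h1 h2 inv)
        refine ⟨D', hinv, ?_⟩
        rw [hun]
        ext t
        simp only [Finset.mem_union, Finset.mem_insert, List.toFinset_cons,
          List.mem_toFinset]
        tauto
    · rw [if_neg h1]
      have hfull : C.card = q := le_antisymm inv.cardle (not_lt.mp h1)
      obtain ⟨⟨hmK, hmlow⟩, hmmax⟩ := lowest_spec H hfull haC
      obtain ⟨D', hinv, hun⟩ := ih
        ((insert a C).erase (((insert a C).filter (LowestIn ge (insert a C))).max.getD a))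
        (insert (((insert a C).filter (LowestIn ge (insert a C))).max.getD a) D) hsrest
        (fun b hb' x hx => by
          have hxa : ∀ y, y ∈ insert a C → y < b := by
            intro y hy
            rcases Finset.mem_insert.mp hy with rfl | hy
            · exact hsa b hb'
            · exact lt_trans (hba y (Or.inl hy)) (hsa b hb')
          rcases hx with hx | hx
          · exact hxa x (Finset.mem_of_mem_erase hx)
          · rcases Finset.mem_insert.mp hx with rfl | hx
            · exact hxa _ hmK
            · exact lt_trans (hba x (Or.inr hx)) (hsa b hb'))
        (full_step H hba hfull hmK hmlow hmmax inv)
      refine ⟨D', hinv, ?_⟩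
      rw [hun]
      have hmac := Finset.mem_insert.mp hmK
      ext t
      simp only [Finset.mem_union, Finset.mem_insert, Finset.mem_erase,
        List.toFinset_cons, List.mem_toFinset]
      by_cases htm : t = (((insert a C).filter (LowestIn ge (insert a C))).max.getD a)
      · subst htm; tauto
      · tauto

end Hyps

end CCAux
/-- **(Part of Lemma 5.)** If `≿ₛ` satisfies PD, WO and DC (with students labeled first by
type and then by weakly decreasing within-type priority), then the constructed choice
function `Cₛ^≿` is consistent with `≿ₛ`. -/
theorem Cchoice_consistent {I : Type*} [LinearOrder I] [Fintype I] [DecidableEq I]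
    (τ : I → ℕ) (q : ℕ)
    (ge : Finset I → Option I → Option I → Prop)
    (hcomp : CompleteP q ge) (htr : TransP q ge)
    (hPD : PD τ q ge) (hWO : WO τ q ge) (hDC : DC τ q ge)
    (hτmono : ∀ i j : I, τ i < τ j → i < j)
    (hlab : ∀ J : Finset I, J.card < q → ∀ i j : I, i ∉ J → j ∉ J →
      τ i = τ j → i ≤ j → ge J (some i) (some j)) :
    ConsistentP q ge (Cchoice ge q) := by
  have H : CCAux.Hyp τ q ge := ⟨hcomp, htr, hPD, hWO, hDC, hlab⟩
  intro J
  have hsort := (Finset.sortedLT_sort J).pairwise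
  have inv0 : CCAux.Inv q ge ∅ ∅ :=
    ⟨by simp, by simp, by simp, by simp, by simp⟩
  obtain ⟨D', hinv, hun⟩ := CCAux.buildC_main H (J.sort (· ≤ ·)) ∅ ∅ hsort
    (by simp) inv0
  have hCh : Cchoice ge q J = buildC ge q (J.sort (· ≤ ·)) ∅ := rfl
  rw [← hCh] at hinv hun
  have hunJ : Cchoice ge q J ∪ D' = J := by
    rw [hun]; simp [Finset.sort_toFinset]
  have hD' : D' = J \ Cchoice ge q J := by
    ext t
    simp only [Finset.mem_sdiff]
    constructor
    · intro ht
      refine ⟨?_, fun htC => hinv.disj t htC ht⟩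
      rw [← hunJ]; exact Finset.mem_union_right _ ht
    · rintro ⟨htJ, htC⟩
      have : t ∈ Cchoice ge q J ∪ D' := by rw [hunJ]; exact htJ
      rcases Finset.mem_union.mp this with h | h
      exacts [absurd h htC, h]
  constructor
  · intro i hi
    exact ⟨fun j hj => hinv.beats i hi j (by rw [hD']; exact hj), hinv.accpt i hi⟩
  · intro hq _ j hj
    exact hinv.rej hq j (by rw [hD']; exact hj)
end
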